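/- The following identities hold: (i) for every λ ∈ 𝒫_B(n), ((λ⁻)_C)* = ((λ*)⁻)_C; (ii) for every λ ∈ 𝒫_C(n), ((λ⁺)_B)* = ((λ*)⁺)_B; (iii) for every partition λ such that λ ∈ 𝒫_D(n) or λ* ∈ 𝒫_C(n), ((λ*)_D)* = (((λ⁺)⁻))_C, i.e., the transpose of the D-collapse of λ* equals the C-collapse of the partition obtained from λ by adding 1 to its largest part and subtracting 1 from its smallest part. -/
import Mathlib


namespace NilDual

/-- A "partition" is encoded as a multiset of natural numbers (its parts). -/
abbrev Ptn := Multiset ℕ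

/-- All parts are positive. -/
def IsPartition (l : Ptn) : Prop := ∀ a ∈ l, 0 < a

/-- `height l a` is the number of parts of `l` that are ≥ `a`. -/
def height (l : Ptn) (a : ℕ) : ℕ := Multiset.card (l.filter (fun p => a ≤ p))

/-- `psum l j` is the sum of the `j` largest parts of `l`. -/
def psum (l : Ptn) (j : ℕ) : ℕ := ∑ a ∈ Finset.Icc 1 l.sum, min j (height l a)

/-- `Dom l m` means `l ≤ m` in the dominance order. -/
def Dom (l m : Ptn) : Prop := ∀ j : ℕ, psum l j ≤ psum m j

/-- The transpose (conjugate) partition. -/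
def transpose (l : Ptn) : Ptn :=
  Multiset.filter (fun x => 0 < x)
    (Multiset.map (fun a => height l a) (Finset.Icc 1 l.sum).val)

/-- The largest part (0 for the empty partition). -/
def maxPart (l : Ptn) : ℕ := l.sup

/-- The smallest part (0 for the empty partition). -/
noncomputable def minPart (l : Ptn) : ℕ := sInf {a : ℕ | a ∈ l}

/-- `λ⁺`: add 1 to the largest part. -/
def up (l : Ptn) : Ptn := (maxPart l + 1) ::ₘ l.erase (maxPart l)

/-- `λ⁻`: subtract 1 from the smallest part, deleting it if it becomes 0. -/
noncomputable def down (l : Ptn) : Ptn :=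
  if minPart l ≤ 1 then l.erase (minPart l)
  else (minPart l - 1) ::ₘ l.erase (minPart l)

/-- The join `λ ∨ μ = (λ* ∪ μ*)*`. -/
def pjoin (l m : Ptn) : Ptn := transpose (transpose l + transpose m)

/-- `λ₋ = (λ*⁻)*`. -/
noncomputable def lowerStar (l : Ptn) : Ptn := transpose (down (transpose l))

inductive PType | B | C | D
deriving DecidableEq

/-- Parts of this parity must occur with even multiplicity in a partition of type `X`. -/
def badPart : PType → ℕ → Prop
  | PType.B, a => Even a
  | PType.C, a => Odd a
  | PType.D, a => Even a

/-- Membership in `𝒫_X` (sum unconstrained). -/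
def InP (X : PType) (l : Ptn) : Prop :=
  IsPartition l ∧ ∀ a : ℕ, badPart X a → Even (l.count a)

/-- The parity of `n` required for `𝒫_X(n)` to be defined. -/
def sumParity : PType → ℕ → Prop
  | PType.B, n => Odd n
  | PType.C, n => Even n
  | PType.D, n => Even n

/-- `m` is the X-collapse of `l`: `m ∈ 𝒫_X(|l|)`, `m ≤ l` in dominance order, and `m`
dominates every member of `𝒫_X(|l|)` that is dominated by `l`. -/
def IsCollapse (X : PType) (l m : Ptn) : Prop :=
  InP X m ∧ m.sum = l.sum ∧ Dom m l ∧
    ∀ ν : Ptn, InP X ν → ν.sum = l.sum → Dom ν l → Dom ν m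

def CollapseDefined (X : PType) (l : Ptn) : Prop := ∃ m, IsCollapse X l m

open Classical in
/-- The X-collapse `λ_X` (junk value `0` if it does not exist). -/
noncomputable def collapse (X : PType) (l : Ptn) : Ptn :=
  if h : CollapseDefined X l then h.choose else 0

/-- `l` is superior to `m`: smallest part of `l` ≥ largest part of `m`. -/
def Superior (l m : Ptn) : Prop := maxPart m ≤ minPart l

def EvenlySuperior (l m : Ptn) : Prop := ∃ k : ℕ, Even k ∧ maxPart m ≤ k ∧ k ≤ minPart l

def OddlySuperior (l m : Ptn) : Prop := ∃ k : ℕ, Odd k ∧ maxPart m ≤ k ∧ k ≤ minPart l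

/-- The parity required of marked parts in type `X`. -/
def markParity : PType → ℕ → Prop
  | PType.C, a => Even a
  | _, a => Odd a

/-- `(ν, η)` is a marked partition of type `X`, with underlying partition `λ = ν + η`. -/
def IsMarked (X : PType) (nu eta : Ptn) : Prop :=
  InP X (nu + eta) ∧ sumParity X (nu + eta).sum ∧
  (∀ a ∈ nu, nu.count a = 1 ∧ markParity X a) ∧
  ((X = PType.B ∨ X = PType.D) → Even (Multiset.card nu))

/-- The Sommers duality map `d_S` on marked partitions `(ν, η)`. -/
noncomputable def dS (X : PType) (nu eta : Ptn) : Ptn :=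
  match X with
  | PType.B => collapse PType.C (transpose (nu + collapse PType.C (down eta)))
  | PType.C => collapse PType.B (transpose (nu + collapse PType.B (up eta)))
  | PType.D =>
      collapse PType.D (transpose (nu + transpose (collapse PType.D (transpose eta))))

/-- `a` is a markable part of `l` in type `X`. -/
def Markable (X : PType) (l : Ptn) (a : ℕ) : Prop :=
  a ∈ l ∧ markParity X a ∧
    (match X with
     | PType.B => Odd (height l a)
     | PType.C => Even (height l a)
     | PType.D => Even (height l a))

/-- The marked partition `⟨l, ν⟩` is reduced. -/
def Reduced (X : PType) (l nu : Ptn) : Prop := ∀ a ∈ nu, Markable X l a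

/-- The parts entering the definition of a special marked partition:
even of odd height (B), odd of even height (C), even of even height (D). -/
def AntiPart (X : PType) (l : Ptn) (a : ℕ) : Prop :=
  match X with
  | PType.B => Even a ∧ Odd (height l a)
  | PType.C => Odd a ∧ Even (height l a)
  | PType.D => Even a ∧ Even (height l a)

/-- The reduced marked partition `⟨l, ν⟩` is special. -/
def SpecialMP (X : PType) (l nu : Ptn) : Prop :=
  ∀ a ∈ l, AntiPart X l a → Even (height nu a)

/-- `a` is the largest part of `l` whose height satisfies `P`. -/
def LargestWith (l : Ptn) (P : ℕ → Prop) (a : ℕ) : Prop :=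
  a ∈ l ∧ P (height l a) ∧ ∀ b ∈ l, P (height l b) → b ≤ a

/-- Height parity for the top marked part in a basic block. -/
def heightParity : PType → ℕ → Prop
  | PType.B => fun n => Odd n
  | _ => fun n => Even n

/-- A basic block of type `X`. -/
def BasicBlock (X : PType) (nu eta : Ptn) : Prop :=
  IsMarked X nu eta ∧
  ((∃ n1 n2 : ℕ, n1 < n2 ∧ nu = {n2, n1} ∧ n1 = minPart (nu + eta) ∧
      LargestWith (nu + eta) (heightParity X) n2) ∨
   (X = PType.C ∧ ∃ n2 : ℕ, nu = {n2} ∧ LargestWith (nu + eta) (heightParity X) n2))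

/-- An ultrabasic block: a basic block with `n₁ ≤ 1`. -/
def Ultrabasic (X : PType) (nu eta : Ptn) : Prop :=
  BasicBlock X nu eta ∧ (Multiset.card nu = 2 → minPart nu ≤ 1)


-- ===== S1: basic height lemmas =====

lemma height_mono (l : Ptn) {a b : ℕ} (h : a ≤ b) : height l b ≤ height l a := by
  unfold height
  apply Multiset.card_le_card
  apply Multiset.monotone_filter_right
  intro p hp; omega

lemma mem_le_sum {l : Ptn} {p : ℕ} (hp : p ∈ l) : p ≤ l.sum :=
  Multiset.single_le_sum (fun x _ => Nat.zero_le x) p hp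

lemma height_eq_zero {l : Ptn} {a : ℕ} (h : l.sum < a) : height l a = 0 := by
  unfold height
  rw [Multiset.card_eq_zero, Multiset.filter_eq_nil]
  intro p hp
  have := mem_le_sum hp
  omega

lemma height_pos_le_sum {l : Ptn} {a : ℕ} (h : 1 ≤ height l a) : a ≤ l.sum := by
  by_contra hc
  rw [height_eq_zero (by omega)] at h
  omega

lemma height_le_card (l : Ptn) (a : ℕ) : height l a ≤ Multiset.card l :=
  Multiset.card_le_card (Multiset.filter_le _ l)

lemma height_one_eq_card {l : Ptn} (hl : IsPartition l) :
    height l 1 = Multiset.card l := by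
  unfold height
  congr 1
  rw [Multiset.filter_eq_self]
  intro p hp; exact hl p hp

lemma card_le_sum {l : Ptn} (hl : IsPartition l) : Multiset.card l ≤ l.sum := by
  calc Multiset.card l = (l.map (fun _ => 1)).sum := by
        simp
    _ ≤ l.sum := by
        apply Multiset.sum_map_le_sum
        intro p hp; exact hl p hp

lemma height_succ_add_count (l : Ptn) (a : ℕ) :
    height l a = height l (a + 1) + l.count a := by
  unfold height
  induction l using Multiset.induction with
  | empty => simp
  | cons p t ih =>
    rw [Multiset.filter_cons, Multiset.filter_cons, Multiset.count_cons]
    by_cases h1 : a ≤ p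
    · by_cases h2 : a + 1 ≤ p
      · have : ¬ (a = p) := by omega
        simp [h1, h2, this] at *
        omega
      · have : a = p := by omega
        simp [h1, h2, ← this] at *
        omega
    · have h2 : ¬ (a + 1 ≤ p) := by omega
      have : ¬ (a = p) := by omega
      simp [h1, h2, this] at *
      omega

lemma ext_of_height {l m : Ptn} (hl : IsPartition l) (hm : IsPartition m)
    (h : ∀ a, 1 ≤ a → height l a = height m a) : l = m := by
  have hcount : ∀ a, l.count a = m.count a := by
    intro a
    match a with
    | 0 =>
      have h1 : l.count 0 = 0 := by
        rw [Multiset.count_eq_zero]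
        intro hc; exact absurd (hl 0 hc) (by omega)
      have h2 : m.count 0 = 0 := by
        rw [Multiset.count_eq_zero]
        intro hc; exact absurd (hm 0 hc) (by omega)
      omega
    | a + 1 =>
      have e1 := height_succ_add_count l (a+1)
      have e2 := height_succ_add_count m (a+1)
      have g1 := h (a+1) (by omega)
      have g2 := h (a+1+1) (by omega)
      omega
  exact Multiset.ext.mpr hcount

-- sum as sum of heights
lemma sum_eq_sum_heights {l : Ptn} {K : ℕ} (hK : l.sum ≤ K) :
    l.sum = ∑ a ∈ Finset.Icc 1 K, height l a := by
  unfold height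
  induction l using Multiset.induction with
  | empty => simp
  | cons p t ih =>
    have hps : p + t.sum = (p ::ₘ t).sum := by simp
    have htK : t.sum ≤ K := by omega
    have hpK : p ≤ K := by
      have : p ≤ (p ::ₘ t).sum := mem_le_sum (by simp)
      omega
    have step : ∀ a, Multiset.card (Multiset.filter (fun q => a ≤ q) (p ::ₘ t))
        = Multiset.card (Multiset.filter (fun q => a ≤ q) t) + (if a ≤ p then 1 else 0) := by
      intro a
      rw [Multiset.filter_cons]
      split_ifs with hap
      · simp
      · simp
    calc (p ::ₘ t).sum = t.sum + p := by simp; omega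
      _ = (∑ a ∈ Finset.Icc 1 K, Multiset.card (Multiset.filter (fun q => a ≤ q) t)) + p := by
          rw [← ih htK]
      _ = ∑ a ∈ Finset.Icc 1 K, (Multiset.card (Multiset.filter (fun q => a ≤ q) t) + (if a ≤ p then 1 else 0)) := by
          rw [Finset.sum_add_distrib]
          congr 1
          rw [← Finset.card_filter]
          rw [show Finset.filter (fun a => a ≤ p) (Finset.Icc 1 K) = Finset.Icc 1 p by
            ext x; simp [Finset.mem_Icc]; omega]
          simp [Nat.card_Icc]
      _ = ∑ a ∈ Finset.Icc 1 K, Multiset.card (Multiset.filter (fun q => a ≤ q) (p ::ₘ t)) := by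
          apply Finset.sum_congr rfl
          intro a _; rw [step a]

-- ===== S2: mkP, transpose, Galois, psum =====

def mkP (g : ℕ → ℕ) (K : ℕ) : Ptn :=
  Multiset.filter (fun x => 0 < x) ((Finset.Icc 1 K).val.map g)

lemma transpose_eq_mkP (l : Ptn) : transpose l = mkP (fun a => height l a) l.sum := rfl

lemma mkP_isPartition (g : ℕ → ℕ) (K : ℕ) : IsPartition (mkP g K) := by
  intro a ha
  exact (Multiset.mem_filter.mp ha).2

lemma height_mkP (g : ℕ → ℕ) (K : ℕ) {j : ℕ} (hj : 1 ≤ j) :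
    height (mkP g K) j = (Finset.filter (fun i => j ≤ g i) (Finset.Icc 1 K)).card := by
  unfold height mkP
  rw [Multiset.filter_filter]
  have hpred : Multiset.filter (fun a => j ≤ a ∧ 0 < a) ((Finset.Icc 1 K).val.map g)
      = Multiset.filter (fun a => j ≤ a) ((Finset.Icc 1 K).val.map g) := by
    apply Multiset.filter_congr
    intro x _
    constructor
    · rintro ⟨h1, _⟩; exact h1
    · intro h1; exact ⟨h1, by omega⟩
  rw [hpred, Multiset.filter_map, Multiset.card_map]
  have h2 : Multiset.filter ((fun a => j ≤ a) ∘ g) (Finset.Icc 1 K).val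
      = Multiset.filter (fun i => j ≤ g i) (Finset.Icc 1 K).val := by
    apply Multiset.filter_congr; intro x _; exact Iff.rfl
  rw [h2, ← Finset.filter_val]
  rfl

lemma sum_filter_pos (s : Multiset ℕ) : (Multiset.filter (fun x => 0 < x) s).sum = s.sum := by
  induction s using Multiset.induction with
  | empty => simp
  | cons p t ih =>
    rw [Multiset.filter_cons]
    split_ifs with h
    · simp [ih]
    · simp [ih]; omega

lemma sum_mkP (g : ℕ → ℕ) (K : ℕ) : (mkP g K).sum = ∑ i ∈ Finset.Icc 1 K, g i := by
  unfold mkP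
  rw [sum_filter_pos]
  rfl

lemma mkP_galois {g : ℕ → ℕ} {K : ℕ} (hg : ∀ {x y : ℕ}, 1 ≤ x → x ≤ y → g y ≤ g x)
    (hgK : ∀ j, 1 ≤ g j → j ≤ K) {a j : ℕ} (ha : 1 ≤ a) (hj : 1 ≤ j) :
    a ≤ height (mkP g K) j ↔ j ≤ g a := by
  rw [height_mkP g K hj]
  constructor
  · intro h
    by_contra hc
    have hsub : Finset.filter (fun i => j ≤ g i) (Finset.Icc 1 K) ⊆ Finset.Icc 1 (a - 1) := by
      intro i hi
      rw [Finset.mem_filter, Finset.mem_Icc] at hi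
      rw [Finset.mem_Icc]
      rcases hi with ⟨⟨hi1, _⟩, hi2⟩
      refine ⟨hi1, ?_⟩
      by_contra hia
      have := hg (show 1 ≤ a by omega) (show a ≤ i by omega)
      omega
    have := Finset.card_le_card hsub
    rw [Nat.card_Icc] at this
    omega
  · intro h
    have hsub : Finset.Icc 1 a ⊆ Finset.filter (fun i => j ≤ g i) (Finset.Icc 1 K) := by
      intro i hi
      rw [Finset.mem_Icc] at hi
      rw [Finset.mem_filter, Finset.mem_Icc]
      have hgi : j ≤ g i := le_trans h (hg hi.1 hi.2)
      exact ⟨⟨hi.1, hgK i (by omega)⟩, hgi⟩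
    have := Finset.card_le_card hsub
    rw [Nat.card_Icc] at this
    omega

/-- the j-th largest part of l -/
def pt (l : Ptn) (j : ℕ) : ℕ := height (transpose l) j

lemma pt_galois (l : Ptn) {a j : ℕ} (ha : 1 ≤ a) (hj : 1 ≤ j) :
    a ≤ pt l j ↔ j ≤ height l a := by
  unfold pt
  rw [transpose_eq_mkP]
  exact mkP_galois (fun {x y} _ h => height_mono l h) (fun i hi => height_pos_le_sum hi) ha hj

lemma nat_le_ext {x y : ℕ} (h : ∀ j, 1 ≤ j → (j ≤ x ↔ j ≤ y)) : x = y := by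
  rcases Nat.eq_zero_or_pos x with hx | hx
  · rcases Nat.eq_zero_or_pos y with hy | hy
    · omega
    · have := (h y (by omega)).mpr (le_refl y); omega
  · rcases Nat.eq_zero_or_pos y with hy | hy
    · have := (h x (by omega)).mp (le_refl x); omega
    · have h1 := (h x (by omega)).mp (le_refl x)
      have h2 := (h y (by omega)).mpr (le_refl y)
      omega

lemma transpose_isPartition (l : Ptn) : IsPartition (transpose l) :=
  mkP_isPartition _ _

lemma height_transpose_transpose {l : Ptn} (a : ℕ) (ha : 1 ≤ a) :
    height (transpose (transpose l)) a = height l a := by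
  apply nat_le_ext
  intro j hj
  have h1 : (j ≤ height (transpose (transpose l)) a) ↔ (a ≤ height (transpose l) j) :=
    pt_galois (transpose l) hj ha
  have h2 : (a ≤ pt l j) ↔ (j ≤ height l a) := pt_galois l ha hj
  exact h1.trans h2

lemma transpose_transpose {l : Ptn} (hl : IsPartition l) :
    transpose (transpose l) = l := by
  apply ext_of_height (transpose_isPartition _) hl
  intro a ha
  exact height_transpose_transpose a ha

lemma transpose_sum (l : Ptn) : (transpose l).sum = l.sum := by
  rw [transpose_eq_mkP, sum_mkP]
  exact (sum_eq_sum_heights (le_refl _)).symm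

-- psum lemmas
lemma psum_zero (l : Ptn) : psum l 0 = 0 := by
  unfold psum; simp

lemma psum_ext_range {l : Ptn} {K : ℕ} (hK : l.sum ≤ K) (j : ℕ) :
    psum l j = ∑ a ∈ Finset.Icc 1 K, min j (height l a) := by
  unfold psum
  apply Finset.sum_subset
  · intro x hx
    rw [Finset.mem_Icc] at *
    omega
  · intro x hx hnx
    rw [Finset.mem_Icc] at *
    have : height l x = 0 := height_eq_zero (by omega)
    simp [this]

lemma psum_succ (l : Ptn) (j : ℕ) : psum l (j + 1) = psum l j + pt l (j + 1) := by
  unfold psum pt transpose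
  rw [show (Multiset.filter (fun x => 0 < x)
    (Multiset.map (fun a => height l a) (Finset.Icc 1 l.sum).val)) = mkP (fun a => height l a) l.sum from rfl]
  rw [height_mkP _ _ (by omega : 1 ≤ j + 1)]
  rw [Finset.card_filter, ← Finset.sum_add_distrib]
  apply Finset.sum_congr rfl
  intro a _
  split_ifs with h
  · omega
  · omega

lemma pt_mono (l : Ptn) {i j : ℕ} (h : i ≤ j) : pt l j ≤ pt l i := height_mono _ h

lemma psum_mono (l : Ptn) {i j : ℕ} (h : i ≤ j) : psum l i ≤ psum l j := by
  induction j, h using Nat.le_induction with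
  | base => omega
  | succ k hk ih =>
    have := psum_succ l k
    omega

lemma psum_le_sum (l : Ptn) (j : ℕ) : psum l j ≤ l.sum := by
  unfold psum
  calc ∑ a ∈ Finset.Icc 1 l.sum, min j (height l a)
      ≤ ∑ a ∈ Finset.Icc 1 l.sum, height l a := by
        apply Finset.sum_le_sum; intro a _; omega
    _ = l.sum := (sum_eq_sum_heights (le_refl _)).symm

lemma psum_eq_sum_of_card {l : Ptn} {j : ℕ} (h : height l 1 ≤ j) : psum l j = l.sum := by
  unfold psum
  have hc : ∀ a ∈ Finset.Icc 1 l.sum, min j (height l a) = height l a := by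
    intro a ha
    rw [Finset.mem_Icc] at ha
    have := height_mono l (show 1 ≤ a by omega)
    omega
  exact (Finset.sum_congr rfl hc).trans (sum_eq_sum_heights (le_refl _)).symm

lemma pt_pos_iff {l : Ptn} {j : ℕ} (hj : 1 ≤ j) : 1 ≤ pt l j ↔ j ≤ height l 1 :=
  pt_galois l (by omega) hj

lemma pt_le_sum (l : Ptn) {j : ℕ} (hj : 1 ≤ j) : pt l j ≤ l.sum := by
  rcases Nat.eq_zero_or_pos (pt l j) with h | h
  · omega
  · have := (pt_galois l (le_refl 1) hj).mpr ((pt_galois l (le_refl 1) hj).mp (by omega))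
    -- pt l j ≤ max part ≤ sum; simpler: pt l j ≤ card (transpose l) path
    have h2 : pt l j ≤ (transpose l).sum := by
      unfold pt
      calc height (transpose l) j ≤ Multiset.card (transpose l) := height_le_card _ _
        _ ≤ (transpose l).sum := card_le_sum (transpose_isPartition l)
    rw [transpose_sum] at h2
    exact h2

lemma psum_transpose {l : Ptn} (hl : IsPartition l) (j : ℕ) :
    psum (transpose l) j = ∑ i ∈ Finset.Icc 1 j, height l i := by
  induction j with
  | zero => simp [psum_zero]
  | succ k ih =>
    rw [psum_succ, ih]
    have : pt (transpose l) (k+1) = height l (k+1) := by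
      unfold pt
      rw [transpose_transpose hl]
    rw [this, Finset.sum_Icc_succ_top (by omega : 1 ≤ k + 1)]

-- ===== S3: dominance duality, extensionality =====

lemma ext_of_psum {l m : Ptn} (hl : IsPartition l) (hm : IsPartition m)
    (h : ∀ j, psum l j = psum m j) : l = m := by
  have hpt : ∀ j, 1 ≤ j → pt l j = pt m j := by
    intro j hj
    rcases j with _ | k
    · omega
    · have h1 := psum_succ l k
      have h2 := psum_succ m k
      have := h k; have := h (k+1)
      omega
  have : transpose l = transpose m := by
    apply ext_of_height (transpose_isPartition _) (transpose_isPartition _)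
    intro a ha
    exact hpt a ha
  calc l = transpose (transpose l) := (transpose_transpose hl).symm
    _ = transpose (transpose m) := by rw [this]
    _ = m := transpose_transpose hm

lemma psum_bound {l : Ptn} (hl : IsPartition l) (k j : ℕ) :
    psum l k + psum (transpose l) j ≤ k * j + l.sum := by
  rw [psum_transpose hl]
  unfold psum
  have key : ∑ a ∈ Finset.Icc 1 l.sum, min k (height l a)
      + ∑ a ∈ Finset.Icc 1 j, height l a
      ≤ ∑ a ∈ Finset.Icc 1 l.sum, min k (height l a)
      + (∑ a ∈ Finset.Icc 1 (min j l.sum), height l a) := by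
    have : ∑ a ∈ Finset.Icc 1 j, height l a = ∑ a ∈ Finset.Icc 1 (min j l.sum), height l a := by
      rcases Nat.le_total j l.sum with h | h
      · rw [min_eq_left h]
      · rw [min_eq_right h]
        symm
        apply Finset.sum_subset
        · intro x hx; rw [Finset.mem_Icc] at *; omega
        · intro x hx hnx
          rw [Finset.mem_Icc] at *
          exact height_eq_zero (by omega)
    omega
  apply le_trans key
  set j' := min j l.sum with hj'
  have hsub : Finset.Icc 1 j' ⊆ Finset.Icc 1 l.sum := by
    intro x hx; rw [Finset.mem_Icc] at *; omega
  calc ∑ a ∈ Finset.Icc 1 l.sum, min k (height l a) + ∑ a ∈ Finset.Icc 1 j', height l a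
      = ∑ a ∈ Finset.Icc 1 l.sum, (min k (height l a) + if a ∈ Finset.Icc 1 j' then height l a else 0) := by
        rw [Finset.sum_add_distrib]
        congr 1
        rw [Finset.sum_ite_mem, Finset.inter_eq_right.mpr hsub]
    _ ≤ ∑ a ∈ Finset.Icc 1 l.sum, ((if a ∈ Finset.Icc 1 j' then k else 0) + height l a) := by
        apply Finset.sum_le_sum
        intro a _
        split_ifs with h
        · omega
        · omega
    _ = k * j' + l.sum := by
        rw [Finset.sum_add_distrib, Finset.sum_ite_mem, Finset.inter_eq_right.mpr hsub]
        rw [← sum_eq_sum_heights (le_refl _)]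
        simp [Nat.card_Icc, mul_comm]
    _ ≤ k * j + l.sum := by
        have : j' ≤ j := by omega
        have : k * j' ≤ k * j := Nat.mul_le_mul_left k this
        omega

lemma psum_bound_eq {l : Ptn} (hl : IsPartition l) (k : ℕ) :
    ∃ j, j ≤ l.sum ∧ psum l k + psum (transpose l) j = k * j + l.sum := by
  rcases Nat.eq_zero_or_pos k with hk | hk
  · refine ⟨l.sum, le_refl _, ?_⟩
    subst hk
    rw [psum_zero]
    have h1 : psum (transpose l) l.sum = (transpose l).sum := by
      apply psum_eq_sum_of_card
      calc height (transpose l) 1 ≤ Multiset.card (transpose l) := height_le_card _ _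
        _ ≤ (transpose l).sum := card_le_sum (transpose_isPartition _)
        _ = l.sum := transpose_sum l
    rw [h1, transpose_sum]
    omega
  · refine ⟨pt l k, pt_le_sum l hk, ?_⟩
    rw [psum_transpose hl]
    unfold psum
    set j := pt l k with hj
    have hsub : Finset.Icc 1 j ⊆ Finset.Icc 1 l.sum := by
      intro x hx; rw [Finset.mem_Icc] at *
      have := pt_le_sum l hk
      omega
    have pointwise : ∀ a ∈ Finset.Icc 1 l.sum,
        min k (height l a) + (if a ∈ Finset.Icc 1 j then height l a else 0)
        = (if a ∈ Finset.Icc 1 j then k else 0) + height l a := by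
      intro a ha
      rw [Finset.mem_Icc] at ha
      by_cases h : a ∈ Finset.Icc 1 j
      · have hmem := h
        rw [Finset.mem_Icc] at h
        have : k ≤ height l a := (pt_galois l (by omega) hk).mp (by omega)
        simp [hmem]
        omega
      · have hmem := h
        rw [Finset.mem_Icc] at h
        have : ¬ (a ≤ pt l k) := by omega
        have : ¬ (k ≤ height l a) := fun hc => this ((pt_galois l (by omega) hk).mpr hc)
        simp [hmem]
        omega
    calc ∑ a ∈ Finset.Icc 1 l.sum, min k (height l a) + ∑ a ∈ Finset.Icc 1 j, height l a
        = ∑ a ∈ Finset.Icc 1 l.sum, (min k (height l a) + if a ∈ Finset.Icc 1 j then height l a else 0) := by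
          rw [Finset.sum_add_distrib]
          congr 1
          rw [Finset.sum_ite_mem, Finset.inter_eq_right.mpr hsub]
      _ = ∑ a ∈ Finset.Icc 1 l.sum, ((if a ∈ Finset.Icc 1 j then k else 0) + height l a) :=
          Finset.sum_congr rfl pointwise
      _ = k * j + l.sum := by
          rw [Finset.sum_add_distrib, Finset.sum_ite_mem, Finset.inter_eq_right.mpr hsub]
          rw [← sum_eq_sum_heights (le_refl _)]
          simp [Nat.card_Icc, mul_comm]

lemma dom_transpose {l m : Ptn} (hl : IsPartition l) (hm : IsPartition m)
    (hs : l.sum = m.sum) (h : Dom l m) : Dom (transpose m) (transpose l) := by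
  intro j
  obtain ⟨k, -, hk⟩ := psum_bound_eq (transpose_isPartition l) j
  rw [transpose_transpose hl, transpose_sum] at hk
  -- hk : psum (transpose l) j + psum l k = j * k + l.sum
  have hb := psum_bound hm k j
  -- psum m k + psum (transpose m) j ≤ k * j + m.sum
  have hlm := h k
  have := psum_le_sum l k
  have := psum_le_sum m k
  have : j * k = k * j := Nat.mul_comm j k
  omega

-- ===== S4: min/max parts, up/down =====

lemma le_maxPart {l : Ptn} {p : ℕ} (h : p ∈ l) : p ≤ maxPart l := Multiset.le_sup h

lemma maxPart_mem {l : Ptn} (h : l ≠ 0) : maxPart l ∈ l := by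
  induction l using Multiset.induction with
  | empty => exact absurd rfl h
  | cons p t ih =>
    unfold maxPart
    rw [Multiset.sup_cons]
    rcases Multiset.empty_or_exists_mem t with ht | ⟨x, hx⟩
    · subst ht; simp
    · have htne : t ≠ 0 := by
        intro hc; subst hc; exact absurd hx (Multiset.notMem_zero x)
      rcases Nat.le_total t.sup p with hc | hc
      · have : p ⊔ t.sup = p := by omega
        rw [this]; simp
      · have : p ⊔ t.sup = t.sup := by omega
        rw [this]
        exact Multiset.mem_cons_of_mem (ih htne)

lemma minPart_le {l : Ptn} {p : ℕ} (h : p ∈ l) : minPart l ≤ p := Nat.sInf_le h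

lemma minPart_mem {l : Ptn} (h : l ≠ 0) : minPart l ∈ l := by
  obtain ⟨x, hx⟩ := Multiset.exists_mem_of_ne_zero h
  have hne : ({a : ℕ | a ∈ l}).Nonempty := ⟨x, hx⟩
  exact Nat.sInf_mem hne

lemma maxPart_le_sum (l : Ptn) : maxPart l ≤ l.sum := by
  rcases Multiset.empty_or_exists_mem l with h | ⟨x, hx⟩
  · subst h; simp [maxPart]
  · exact mem_le_sum (maxPart_mem (by intro hc; subst hc; exact absurd hx (Multiset.notMem_zero x)))

lemma height_cons (p : ℕ) (t : Ptn) (a : ℕ) :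
    height (p ::ₘ t) a = height t a + (if a ≤ p then 1 else 0) := by
  unfold height
  rw [Multiset.filter_cons]
  split_ifs with h
  · simp
  · simp

lemma height_erase {l : Ptn} {x : ℕ} (hx : x ∈ l) (a : ℕ) :
    height l a = height (l.erase x) a + (if a ≤ x then 1 else 0) := by
  conv_lhs => rw [← Multiset.cons_erase hx]
  exact height_cons x (l.erase x) a

lemma sum_erase {l : Ptn} {x : ℕ} (hx : x ∈ l) : (l.erase x).sum + x = l.sum := by
  conv_rhs => rw [← Multiset.cons_erase hx]
  simp [Nat.add_comm]

lemma minPart_pos {l : Ptn} (hl : IsPartition l) (h : l ≠ 0) : 1 ≤ minPart l :=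
  hl _ (minPart_mem h)

lemma height_down {l : Ptn} (hl : IsPartition l) (h : l ≠ 0) {a : ℕ} (ha : 1 ≤ a) :
    height (down l) a + (if a = minPart l then 1 else 0) = height l a := by
  have hmem := minPart_mem h
  have hpos := minPart_pos hl h
  have he := height_erase hmem a
  unfold down
  by_cases h1 : minPart l ≤ 1
  · rw [if_pos h1]
    split_ifs at he ⊢ <;> omega
  · rw [if_neg h1, height_cons]
    split_ifs at he ⊢ <;> omega

lemma height_up {l : Ptn} (hl : IsPartition l) {a : ℕ} (ha : 1 ≤ a) :
    height (up l) a = height l a + (if a = maxPart l + 1 then 1 else 0) := by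
  rcases Multiset.empty_or_exists_mem l with h | ⟨x, hx⟩
  · subst h
    have h0 : (0 : Ptn).erase (maxPart 0) = 0 := Multiset.erase_zero _
    have hm : maxPart (0 : Ptn) = 0 := by simp [maxPart]
    unfold up
    rw [h0, height_cons, hm]
    split_ifs <;> omega
  · have hne : l ≠ 0 := by intro hc; subst hc; exact absurd hx (Multiset.notMem_zero x)
    have hmem := maxPart_mem hne
    have he := height_erase hmem a
    have hub : height l (maxPart l + 1) = 0 := by
      unfold height
      rw [Multiset.card_eq_zero, Multiset.filter_eq_nil]
      intro p hp
      have := le_maxPart hp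
      omega
    unfold up
    rw [height_cons]
    rcases eq_or_ne a (maxPart l + 1) with h1 | h1
    · subst h1
      split_ifs at he ⊢ <;> omega
    · split_ifs at he ⊢ <;> omega

lemma sum_down {l : Ptn} (hl : IsPartition l) (h : l ≠ 0) : (down l).sum + 1 = l.sum := by
  have hmem := minPart_mem h
  have hpos := minPart_pos hl h
  have he := sum_erase hmem
  unfold down
  split_ifs with h1
  · omega
  · simp only [Multiset.sum_cons]
    omega

lemma sum_up (l : Ptn) : (up l).sum = l.sum + 1 := by
  rcases Multiset.empty_or_exists_mem l with h | ⟨x, hx⟩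
  · subst h; simp [up, maxPart]
  · have hne : l ≠ 0 := by intro hc; subst hc; exact absurd hx (Multiset.notMem_zero x)
    have he := sum_erase (maxPart_mem hne)
    unfold up
    simp only [Multiset.sum_cons]
    omega

lemma down_isPartition {l : Ptn} (hl : IsPartition l) : IsPartition (down l) := by
  unfold down
  split_ifs with h1
  · intro a ha; exact hl a (Multiset.mem_of_mem_erase ha)
  · intro a ha
    rcases Multiset.mem_cons.mp ha with h | h
    · omega
    · exact hl a (Multiset.mem_of_mem_erase h)

lemma up_isPartition {l : Ptn} (hl : IsPartition l) : IsPartition (up l) := by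
  intro a ha
  rcases Multiset.mem_cons.mp ha with h | h
  · omega
  · exact hl a (Multiset.mem_of_mem_erase h)

-- finset sum with one-point indicator
lemma sum_ind {S : Finset ℕ} {f g : ℕ → ℕ} {x : ℕ} {c : ℕ}
    (h : ∀ a ∈ S, g a + (if a = x then c else 0) = f a) :
    (∑ a ∈ S, g a) + (if x ∈ S then c else 0) = ∑ a ∈ S, f a := by
  have : ∑ a ∈ S, f a = ∑ a ∈ S, (g a + if a = x then c else 0) :=
    (Finset.sum_congr rfl (fun a ha => (h a ha).symm))
  rw [this, Finset.sum_add_distrib, Finset.sum_ite_eq' S x (fun _ => c)]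

lemma height_one_minPart {l : Ptn} (hl : IsPartition l) (h : l ≠ 0) :
    height l (minPart l) = height l 1 := by
  unfold height
  congr 1
  apply Multiset.filter_congr
  intro p hp
  have h1 := minPart_le hp
  have h2 := hl p hp
  constructor
  · intro; omega
  · intro; omega

lemma psum_down {l : Ptn} (hl : IsPartition l) (h : l ≠ 0) (j : ℕ) :
    psum (down l) j + (if height l 1 ≤ j then 1 else 0) = psum l j := by
  have hs := sum_down hl h
  have hrange : (down l).sum ≤ l.sum := by omega
  rw [psum_ext_range hrange j]
  unfold psum
  have hmem := minPart_mem h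
  have hpos := minPart_pos hl h
  have hminS : minPart l ∈ Finset.Icc 1 l.sum := by
    rw [Finset.mem_Icc]; exact ⟨hpos, mem_le_sum hmem⟩
  have key : ∀ a ∈ Finset.Icc 1 l.sum,
      min j (height (down l) a) + (if a = minPart l then (if height l 1 ≤ j then 1 else 0) else 0)
      = min j (height l a) := by
    intro a ha
    rw [Finset.mem_Icc] at ha
    have hd := height_down hl h (show 1 ≤ a by omega)
    have hm := height_one_minPart hl h
    rcases eq_or_ne a (minPart l) with h1 | h1
    · subst h1
      split_ifs at hd ⊢ <;> omega
    · split_ifs at hd ⊢ <;> omega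
  have := sum_ind key
  rw [if_pos hminS] at this
  omega

lemma psum_up {l : Ptn} (hl : IsPartition l) (j : ℕ) :
    psum (up l) j = psum l j + (if 1 ≤ j then 1 else 0) := by
  have hs := sum_up l
  have hrange : l.sum ≤ (up l).sum := by omega
  rw [psum_ext_range (le_refl ((up l).sum)) j, psum_ext_range hrange j]
  have hM := maxPart_le_sum l
  have hMS : maxPart l + 1 ∈ Finset.Icc 1 (up l).sum := by
    rw [Finset.mem_Icc]; omega
  have hzero : height l (maxPart l + 1) = 0 := by
    unfold height
    rw [Multiset.card_eq_zero, Multiset.filter_eq_nil]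
    intro p hp
    have := le_maxPart hp
    omega
  have key : ∀ a ∈ Finset.Icc 1 (up l).sum,
      min j (height l a) + (if a = maxPart l + 1 then (if 1 ≤ j then 1 else 0) else 0)
      = min j (height (up l) a) := by
    intro a ha
    rw [Finset.mem_Icc] at ha
    have hu := height_up hl (show 1 ≤ a by omega)
    rcases eq_or_ne a (maxPart l + 1) with h1 | h1
    · subst h1
      split_ifs at hu ⊢ <;> omega
    · split_ifs at hu ⊢ <;> omega
  have := sum_ind key
  rw [if_pos hMS] at this
  omega

-- ===== S5: pt lemmas for up/down, min/max transpose =====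

lemma pt_down {l : Ptn} (hl : IsPartition l) (h : l ≠ 0) {i : ℕ} (hi : 1 ≤ i) :
    pt (down l) i + (if i = height l 1 then 1 else 0) = pt l i := by
  obtain ⟨k, rfl⟩ : ∃ k, i = k + 1 := ⟨i - 1, by omega⟩
  have h1 := psum_succ l k
  have h2 := psum_succ (down l) k
  have h3 := psum_down hl h k
  have h4 := psum_down hl h (k + 1)
  split_ifs at h3 h4 ⊢ <;> omega

lemma pt_up {l : Ptn} (hl : IsPartition l) {i : ℕ} (hi : 1 ≤ i) :
    pt (up l) i = pt l i + (if i = 1 then 1 else 0) := by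
  obtain ⟨k, rfl⟩ : ∃ k, i = k + 1 := ⟨i - 1, by omega⟩
  have h1 := psum_succ l k
  have h2 := psum_succ (up l) k
  have h3 := psum_up hl k
  have h4 := psum_up hl (k + 1)
  split_ifs at h3 h4 ⊢ <;> omega

lemma height_pos_le_max {l : Ptn} {a : ℕ} (h : 1 ≤ height l a) : a ≤ maxPart l := by
  unfold height at h
  have : ∃ p ∈ Multiset.filter (fun p => a ≤ p) l, True := by
    rcases Multiset.empty_or_exists_mem (Multiset.filter (fun p => a ≤ p) l) with h0 | h0
    · rw [h0] at h; simp at h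
    · obtain ⟨x, hx⟩ := h0; exact ⟨x, hx, trivial⟩
  obtain ⟨p, hp, -⟩ := this
  rw [Multiset.mem_filter] at hp
  exact le_trans hp.2 (le_maxPart hp.1)

lemma height_maxPart_pos {l : Ptn} (h : l ≠ 0) : 1 ≤ height l (maxPart l) := by
  unfold height
  rw [Nat.succ_le_iff, Multiset.card_pos]
  intro hc
  have := maxPart_mem h
  have : maxPart l ∈ Multiset.filter (fun p => maxPart l ≤ p) l :=
    Multiset.mem_filter.mpr ⟨this, le_refl _⟩
  rw [hc] at this
  exact Multiset.notMem_zero _ this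

lemma transpose_ne_zero {l : Ptn} (hl : IsPartition l) (h : l ≠ 0) : transpose l ≠ 0 := by
  intro hc
  have h1 : l.sum = (transpose l).sum := (transpose_sum l).symm
  rw [hc] at h1
  simp at h1
  obtain ⟨x, hx⟩ := Multiset.exists_mem_of_ne_zero h
  have := hl x hx
  have := mem_le_sum hx
  omega

lemma mem_transpose {l : Ptn} {x : ℕ} :
    x ∈ transpose l ↔ (0 < x ∧ ∃ a, a ∈ Finset.Icc 1 l.sum ∧ height l a = x) := by
  unfold transpose
  rw [Multiset.mem_filter, Multiset.mem_map]
  constructor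
  · rintro ⟨⟨a, ha, rfl⟩, hpos⟩
    exact ⟨hpos, a, ha, rfl⟩
  · rintro ⟨hpos, a, ha, rfl⟩
    exact ⟨⟨a, ha, rfl⟩, hpos⟩

lemma maxPart_transpose {l : Ptn} (hl : IsPartition l) :
    maxPart (transpose l) = height l 1 := by
  rcases Multiset.empty_or_exists_mem l with h | ⟨x, hx⟩
  · subst h
    have : transpose (0 : Ptn) = 0 := by
      unfold transpose; simp
    rw [this]
    simp [maxPart, height]
  · have hne : l ≠ 0 := by intro hc; subst hc; exact absurd hx (Multiset.notMem_zero x)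
    have hsum : 1 ≤ l.sum := by
      have := hl x hx; have := mem_le_sum hx; omega
    have hh1 : 1 ≤ height l 1 := by
      unfold height
      rw [Nat.succ_le_iff, Multiset.card_pos]
      intro hc
      have : x ∈ Multiset.filter (fun p => 1 ≤ p) l := Multiset.mem_filter.mpr ⟨hx, hl x hx⟩
      rw [hc] at this
      exact Multiset.notMem_zero _ this
    apply le_antisymm
    · apply Multiset.sup_le.mpr
      intro b hb
      rw [mem_transpose] at hb
      obtain ⟨hbpos, a, ha, rfl⟩ := hb
      rw [Finset.mem_Icc] at ha
      exact height_mono l ha.1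
    · apply le_maxPart
      rw [mem_transpose]
      exact ⟨by omega, 1, by rw [Finset.mem_Icc]; omega, rfl⟩

lemma minPart_transpose {l : Ptn} (hl : IsPartition l) (h : l ≠ 0) :
    minPart (transpose l) = height l (maxPart l) := by
  have hM : 1 ≤ maxPart l := by
    obtain ⟨x, hx⟩ := Multiset.exists_mem_of_ne_zero h
    have := hl x hx
    have := le_maxPart hx
    omega
  have hMmem : height l (maxPart l) ∈ transpose l := by
    rw [mem_transpose]
    refine ⟨height_maxPart_pos h, maxPart l, ?_, rfl⟩
    rw [Finset.mem_Icc]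
    exact ⟨hM, maxPart_le_sum l⟩
  apply le_antisymm
  · exact minPart_le hMmem
  · have hmem := minPart_mem (transpose_ne_zero hl h)
    rw [mem_transpose] at hmem
    obtain ⟨hpos, a, ha, heq⟩ := hmem
    rw [← heq]
    apply height_mono
    exact height_pos_le_max (by omega)

-- ===== S6: explicit collapse construction =====

def tau (b j : ℕ) : ℕ := if b = 1 then 0 else j % 2

def eps (b : ℕ) (l : Ptn) (j : ℕ) : ℕ :=
  if psum l j % 2 ≠ tau b j ∧ ¬(pt l j = pt l (j+1) ∧ pt l j % 2 = b) then 1 else 0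

def F (b : ℕ) (l : Ptn) (j : ℕ) : ℕ := psum l j - eps b l j

def colD (b : ℕ) (l : Ptn) (j : ℕ) : ℕ := F b l j - F b l (j - 1)

def col (b : ℕ) (l : Ptn) : Ptn := mkP (colD b l) (l.sum + 1)

lemma eps_le_one (b : ℕ) (l : Ptn) (j : ℕ) : eps b l j ≤ 1 := by
  unfold eps; split_ifs <;> omega

lemma tau_le_one (b j : ℕ) : tau b j ≤ 1 := by
  unfold tau; split_ifs <;> omega

lemma tau_zero (b : ℕ) : tau b 0 = 0 := by
  unfold tau; split_ifs <;> omega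

lemma tau_one_eq (j : ℕ) : tau 1 j = 0 := by simp [tau]

lemma tau_ne_one {b : ℕ} (hb1 : b ≠ 1) (j : ℕ) : tau b j = j % 2 := by
  simp [tau, hb1]

lemma eps_zero (b : ℕ) (l : Ptn) : eps b l 0 = 0 := by
  have ht := tau_zero b
  have hp := psum_zero l
  unfold eps
  rw [if_neg]
  rintro ⟨h1, -⟩
  omega

lemma eps_eq_one_iff (b : ℕ) (l : Ptn) (j : ℕ) :
    eps b l j = 1 ↔ (psum l j % 2 ≠ tau b j ∧ ¬(pt l j = pt l (j+1) ∧ pt l j % 2 = b)) := by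
  unfold eps
  split_ifs with h
  · exact ⟨fun _ => h, fun _ => rfl⟩
  · exact ⟨fun hc => absurd hc (by decide), fun hc => absurd hc h⟩

lemma eps_eq_zero_iff (b : ℕ) (l : Ptn) (j : ℕ) :
    eps b l j = 0 ↔ (psum l j % 2 = tau b j ∨ (pt l j = pt l (j+1) ∧ pt l j % 2 = b)) := by
  unfold eps
  split_ifs with h
  · constructor
    · intro hc; exact absurd hc (by decide)
    · intro hc
      exfalso
      obtain ⟨h1, h2⟩ := h
      rcases hc with hc | hc
      · exact h1 hc
      · exact h2 hc
  · constructor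
    · intro _
      by_contra hc
      push_neg at hc
      obtain ⟨hc1, hc2⟩ := hc
      exact h ⟨hc1, fun hh => hc2 hh.1 hh.2⟩
    · intro _; rfl

section ColCorrect

variable {b : ℕ} {l : Ptn}

lemma pt_le_psum (l : Ptn) {j : ℕ} (hj : 1 ≤ j) : pt l j ≤ psum l j := by
  have t1 : psum l 1 ≤ psum l j := psum_mono l hj
  have t2 := psum_succ l 0
  simp only [show (0:ℕ) + 1 = 1 from rfl] at t2
  have t3 := pt_mono l hj
  have := psum_zero l
  omega

lemma eps_le_psum (hb : b ≤ 1) (l : Ptn) (j : ℕ) : eps b l j ≤ psum l j := by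
  rcases Nat.eq_zero_or_pos j with rfl | hj
  · rw [eps_zero]; omega
  · rcases Nat.eq_zero_or_pos (psum l j) with h0 | h0
    · have hp1 : pt l j = 0 := by
        have := pt_le_psum l hj; omega
      have hp2 : pt l (j+1) = 0 := by
        have := pt_mono l (show j ≤ j+1 by omega); omega
      have heq : eps b l j = 0 := by
        rw [eps_eq_zero_iff]
        by_cases hb1 : b = 1
        · -- then exception needs parity 1; check mismatch instead:
          -- tau = 0; psum = 0: match!
          left
          rw [h0]
          unfold tau
          rw [if_pos hb1]
        · right
          exact ⟨by omega, by omega⟩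
      omega
    · have := eps_le_one b l j
      omega

lemma eps_eq_zero_of_pt_zero (hl : IsPartition l) (hb : b ≤ 1)
    (hpar : b = 1 → l.sum % 2 = 0) {j : ℕ} (hj : 1 ≤ j) (hpt : pt l j = 0) :
    eps b l j = 0 := by
  rw [eps_eq_zero_iff]
  by_cases hb1 : b = 1
  · left
    have hcard : height l 1 ≤ j := by
      by_contra hc
      have : 1 ≤ pt l j := (pt_pos_iff hj).mpr (by omega)
      omega
    have h1 : psum l j = l.sum := psum_eq_sum_of_card hcard
    have h2 := hpar hb1
    unfold tau
    rw [if_pos hb1]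
    omega
  · right
    have hb0 : b = 0 := by omega
    have hpt1 : pt l (j+1) = 0 := by
      have := pt_mono l (show j ≤ j + 1 by omega)
      omega
    exact ⟨by omega, by omega⟩

lemma psum_stab (l : Ptn) {j : ℕ} (hj : 1 ≤ j) (hpt : pt l j = 0) :
    psum l j = l.sum := by
  apply psum_eq_sum_of_card
  by_contra hc
  have : 1 ≤ pt l j := (pt_pos_iff hj).mpr (by omega)
  omega

lemma F_zero (b : ℕ) (l : Ptn) : F b l 0 = 0 := by
  unfold F; rw [psum_zero]; omega

lemma F_mono_succ (hl : IsPartition l) (hb : b ≤ 1) (hpar : b = 1 → l.sum % 2 = 0)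
    (j : ℕ) : F b l j ≤ F b l (j + 1) := by
  have hs := psum_succ l j
  have e1 := eps_le_one b l j
  have e2 := eps_le_one b l (j+1)
  rcases Nat.eq_zero_or_pos (pt l (j+1)) with h | h
  · have : eps b l (j+1) = 0 := eps_eq_zero_of_pt_zero hl hb hpar (by omega) h
    unfold F
    have := eps_le_psum hb l j
    omega
  · unfold F
    have := eps_le_psum hb l j
    omega

lemma F_mono (hl : IsPartition l) (hb : b ≤ 1) (hpar : b = 1 → l.sum % 2 = 0)
    {i j : ℕ} (h : i ≤ j) : F b l i ≤ F b l j := by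
  induction j, h using Nat.le_induction with
  | base => omega
  | succ k hk ih => exact le_trans ih (F_mono_succ hl hb hpar k)

/-- mismatch propagates across a part of good parity -/
lemma mismatch_shift (hb : b ≤ 1) (j : ℕ) (hp : pt l (j+1) % 2 ≠ b) :
    (psum l j % 2 = tau b j) ↔ (psum l (j+1) % 2 = tau b (j+1)) := by
  have hs := psum_succ l j
  by_cases hb1 : b = 1
  · subst hb1
    rw [tau_one_eq, tau_one_eq]
    omega
  · rw [tau_ne_one hb1, tau_ne_one hb1]
    have : b = 0 := by omega
    omega

/-- mismatch flips across a part of bad parity -/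
lemma mismatch_flip (hb : b ≤ 1) (j : ℕ) (hp : pt l (j+1) % 2 = b) :
    (psum l j % 2 = tau b j) ↔ ¬(psum l (j+1) % 2 = tau b (j+1)) := by
  have hs := psum_succ l j
  by_cases hb1 : b = 1
  · subst hb1
    rw [tau_one_eq, tau_one_eq]
    omega
  · rw [tau_ne_one hb1, tau_ne_one hb1]
    have : b = 0 := by omega
    omega

-- concavity of F
lemma F_concave (hl : IsPartition l) (hb : b ≤ 1) (hpar : b = 1 → l.sum % 2 = 0)
    {j : ℕ} (hj : 1 ≤ j) : F b l (j + 1) + F b l (j - 1) ≤ 2 * F b l j := by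
  obtain ⟨k, rfl⟩ : ∃ k, j = k + 1 := ⟨j - 1, by omega⟩
  simp only [Nat.add_sub_cancel, show k + 1 + 1 = k + 2 from rfl]
  by_contra hcon
  push_neg at hcon
  have hs1 := psum_succ l k
  have hs2 := psum_succ l (k+1)
  simp only [show k + 1 + 1 = k + 2 from rfl] at hs2
  have hm1 := pt_mono l (show k+1 ≤ k+2 by omega)
  have e0 := eps_le_one b l k
  have e1 := eps_le_one b l (k+1)
  have e2 := eps_le_one b l (k+2)
  have hep0 := eps_le_psum hb l k
  have hep1 := eps_le_psum hb l (k+1)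
  have hep2 := eps_le_psum hb l (k+2)
  have hviol : eps b l (k+1) = 1 ∧ pt l (k+1) + eps b l k + eps b l (k+2) ≤ pt l (k+2) + 1 := by
    unfold F at hcon
    omega
  obtain ⟨heps1, hsmall⟩ := hviol
  rw [eps_eq_one_iff] at heps1
  obtain ⟨hmis, hexc⟩ := heps1
  simp only [show k + 1 + 1 = k + 2 from rfl] at hexc
  -- We show: the relevant neighboring eps are 1, contradicting hsmall.
  -- Case on parity of pt l (k+2) resp pt l (k+1)
  have hE2 : pt l (k+2) % 2 ≠ b → eps b l (k+2) = 1 := by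
    intro hgood
    rw [eps_eq_one_iff]
    constructor
    · intro hmatch
      exact hmis ((mismatch_shift hb (k+1) hgood).mpr hmatch)
    · rintro ⟨-, hq⟩
      exact hgood hq
  have hE0 : pt l (k+1) % 2 ≠ b → eps b l k = 1 := by
    intro hgood
    have hmis0 : psum l k % 2 ≠ tau b k := by
      intro hmatch
      exact hmis ((mismatch_shift hb k hgood).mp hmatch)
    rcases Nat.eq_zero_or_pos k with rfl | hk
    · exfalso
      have := psum_zero l
      have := tau_zero b
      omega
    · rw [eps_eq_one_iff]
      refine ⟨hmis0, ?_⟩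
      rintro ⟨hpe, hq⟩
      rw [hpe] at hq
      exact hgood hq
  rcases Nat.eq_or_lt_of_le hm1 with hpe | hplt
  · -- pt(k+2) = pt(k+1): good parity for both (from hexc)
    have hgood : pt l (k+1) % 2 ≠ b := fun hc => hexc ⟨hpe.symm, hc⟩
    have h2 := hE2 (by omega)
    have h0 := hE0 hgood
    omega
  · -- pt(k+1) = pt(k+2) + 1
    have hpeq : pt l (k+1) = pt l (k+2) + 1 := by omega
    by_cases hq2 : pt l (k+2) % 2 = b
    · have h0 := hE0 (by omega)
      omega
    · have h2 := hE2 hq2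
      omega

end ColCorrect

-- ===== S7: properties of col =====

section ColProps

variable {b : ℕ} {l : Ptn}

lemma pt_zero_of_large {l : Ptn} (hl : IsPartition l) {j : ℕ} (hj : l.sum + 1 ≤ j) :
    pt l j = 0 := by
  by_contra hc
  have h1 : 1 ≤ pt l j := by omega
  have h2 : j ≤ height l 1 := (pt_pos_iff (by omega)).mp h1
  have h3 := height_le_card l 1
  have h4 := card_le_sum hl
  omega

lemma colD_eq_zero_of_large (hl : IsPartition l) (hb : b ≤ 1)
    (hpar : b = 1 → l.sum % 2 = 0) {j : ℕ} (hj : l.sum + 2 ≤ j) :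
    colD b l j = 0 := by
  obtain ⟨k, rfl⟩ : ∃ k, j = k + 1 := ⟨j - 1, by omega⟩
  have h1 : pt l (k+1) = 0 := pt_zero_of_large hl (by omega)
  have h2 : pt l k = 0 := pt_zero_of_large hl (by omega)
  have e1 : eps b l (k+1) = 0 := eps_eq_zero_of_pt_zero hl hb hpar (by omega) h1
  have e2 : eps b l k = 0 := eps_eq_zero_of_pt_zero hl hb hpar (by omega) h2
  have p1 : psum l (k+1) = l.sum := psum_stab l (by omega) h1
  have p2 : psum l k = l.sum := psum_stab l (by omega) h2
  unfold colD F
  simp only [Nat.add_sub_cancel]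
  omega

lemma colD_antitone_succ (hl : IsPartition l) (hb : b ≤ 1)
    (hpar : b = 1 → l.sum % 2 = 0) {j : ℕ} (hj : 1 ≤ j) :
    colD b l (j + 1) ≤ colD b l j := by
  have hc := F_concave hl hb hpar hj
  have hm1 := F_mono hl hb hpar (show j - 1 ≤ j by omega)
  have hm2 := F_mono hl hb hpar (show j ≤ j + 1 by omega)
  unfold colD
  simp only [Nat.add_sub_cancel]
  omega

lemma colD_antitone (hl : IsPartition l) (hb : b ≤ 1)
    (hpar : b = 1 → l.sum % 2 = 0) {x y : ℕ} (hx : 1 ≤ x) (hxy : x ≤ y) :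
    colD b l y ≤ colD b l x := by
  induction y, hxy using Nat.le_induction with
  | base => omega
  | succ k hk ih =>
    have := colD_antitone_succ hl hb hpar (show 1 ≤ k by omega)
    omega

lemma colD_pos_le (hl : IsPartition l) (hb : b ≤ 1)
    (hpar : b = 1 → l.sum % 2 = 0) {j : ℕ} (h : 1 ≤ colD b l j) :
    j ≤ l.sum + 1 := by
  by_contra hc
  rw [colD_eq_zero_of_large hl hb hpar (by omega)] at h
  omega

lemma col_isPartition (b : ℕ) (l : Ptn) : IsPartition (col b l) := mkP_isPartition _ _

lemma pt_col (hl : IsPartition l) (hb : b ≤ 1) (hpar : b = 1 → l.sum % 2 = 0)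
    {j : ℕ} (hj : 1 ≤ j) : pt (col b l) j = colD b l j := by
  apply nat_le_ext
  intro a ha
  have h1 : (a ≤ pt (col b l) j) ↔ (j ≤ height (col b l) a) := pt_galois (col b l) ha hj
  have h2 : (j ≤ height (col b l) a) ↔ (a ≤ colD b l j) := by
    unfold col
    exact mkP_galois (fun {x y} h1 h2 => colD_antitone hl hb hpar h1 h2)
      (fun i hi => colD_pos_le hl hb hpar hi) hj ha
  rw [h1, h2]

lemma F_succ_eq (hl : IsPartition l) (hb : b ≤ 1) (hpar : b = 1 → l.sum % 2 = 0)
    (j : ℕ) : F b l (j + 1) = F b l j + colD b l (j + 1) := by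
  have := F_mono_succ hl hb hpar j
  unfold colD
  simp only [Nat.add_sub_cancel]
  omega

lemma psum_col (hl : IsPartition l) (hb : b ≤ 1) (hpar : b = 1 → l.sum % 2 = 0)
    (j : ℕ) : psum (col b l) j = F b l j := by
  induction j with
  | zero => rw [psum_zero, F_zero]
  | succ k ih =>
    rw [psum_succ, ih, pt_col hl hb hpar (by omega : 1 ≤ k + 1),
      F_succ_eq hl hb hpar k]

lemma F_stab (hl : IsPartition l) (hb : b ≤ 1) (hpar : b = 1 → l.sum % 2 = 0)
    {j : ℕ} (hj : l.sum + 1 ≤ j) : F b l j = l.sum := by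
  rcases Nat.eq_zero_or_pos j with rfl | hjp
  · have : l.sum = 0 := by omega
    rw [F_zero]; omega
  · have h1 : pt l j = 0 := pt_zero_of_large hl hj
    have e1 : eps b l j = 0 := eps_eq_zero_of_pt_zero hl hb hpar hjp h1
    have p1 : psum l j = l.sum := psum_stab l hjp h1
    unfold F
    omega

lemma sum_col (hl : IsPartition l) (hb : b ≤ 1) (hpar : b = 1 → l.sum % 2 = 0) :
    (col b l).sum = l.sum := by
  set J := max (height (col b l) 1) (l.sum + 1) with hJ
  have h1 : psum (col b l) J = (col b l).sum := psum_eq_sum_of_card (by omega)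
  have h2 : psum (col b l) J = F b l J := psum_col hl hb hpar J
  have h3 : F b l J = l.sum := F_stab hl hb hpar (by omega)
  omega

lemma dom_col (hl : IsPartition l) (hb : b ≤ 1) (hpar : b = 1 → l.sum % 2 = 0) :
    Dom (col b l) l := by
  intro j
  rw [psum_col hl hb hpar]
  unfold F
  omega

-- ===== corner parity machinery =====

def CountEven (b : ℕ) (ν : Ptn) : Prop := ∀ a, a % 2 = b → (ν.count a) % 2 = 0

lemma psum_run {ν : Ptn} {j1 j2 c : ℕ} (hle : j1 ≤ j2)
    (h : ∀ i, j1 < i → i ≤ j2 → pt ν i = c) :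
    psum ν j2 = psum ν j1 + (j2 - j1) * c := by
  induction j2, hle using Nat.le_induction with
  | base => simp
  | succ k hk ih =>
    have hs := psum_succ ν k
    have hik : pt ν (k+1) = c := h (k+1) (by omega) (by omega)
    have ihh : psum ν k = psum ν j1 + (k - j1) * c := by
      apply ih
      intro i h1 h2
      exact h i h1 (by omega)
    have : (k + 1 - j1) * c = (k - j1) * c + c := by
      have : k + 1 - j1 = (k - j1) + 1 := by omega
      rw [this, Nat.add_mul, Nat.one_mul]
    omega

lemma pt_between {ν : Ptn} {a i : ℕ} (ha : 1 ≤ a)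
    (h1 : height ν (a+1) < i) (h2 : i ≤ height ν a) : pt ν i = a := by
  have hi : 1 ≤ i := by omega
  have hu : a ≤ pt ν i := (pt_galois ν ha hi).mpr h2
  have hv : ¬ (a + 1 ≤ pt ν i) := by
    intro hc
    have := (pt_galois ν (by omega : 1 ≤ a + 1) hi).mp hc
    omega
  omega

lemma KPaux {ν : Ptn} (hν : IsPartition ν) (hb : b ≤ 1) (hc : CountEven b ν)
    (t : ℕ) : psum ν (height ν (t+1)) % 2 = tau b (height ν (t+1)) := by
  -- downward induction from maxPart
  suffices H : ∀ k t : ℕ, maxPart ν ≤ t + k →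
      psum ν (height ν (t+1)) % 2 = tau b (height ν (t+1)) by
    exact H (maxPart ν) t (by omega)
  intro k
  induction k with
  | zero =>
    intro t ht
    have h0 : height ν (t+1) = 0 := by
      by_contra hcz
      have := height_pos_le_max (show 1 ≤ height ν (t+1) by omega)
      omega
    rw [h0, psum_zero, tau_zero]
  | succ k ih =>
    intro t ht
    rcases Nat.lt_or_ge (maxPart ν) (t + 1) with hlt | hge
    · -- t itself already ≥ max
      have h0 : height ν (t+1) = 0 := by
        by_contra hcz
        have := height_pos_le_max (show 1 ≤ height ν (t+1) by omega)
        omega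
      rw [h0, psum_zero, tau_zero]
    · have ihh := ih (t+1) (by omega)
      set j1 := height ν (t+2) with hj1
      set j2 := height ν (t+1) with hj2
      have hle : j1 ≤ j2 := height_mono ν (by omega)
      have hcount : j2 = j1 + ν.count (t+1) := by
        have := height_succ_add_count ν (t+1)
        simp only [show t+1+1 = t+2 from rfl] at this
        omega
      have hrun : psum ν j2 = psum ν j1 + (j2 - j1) * (t+1) := by
        apply psum_run hle
        intro i hi1 hi2
        exact pt_between (by omega) hi1 hi2
      have hmm := Nat.mul_mod (j2 - j1) (t+1) 2
      by_cases hb1 : b = 1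
      · subst hb1
        rw [tau_one_eq] at ihh ⊢
        by_cases hp2 : (t+1) % 2 = 0
        · rw [hp2, Nat.mul_zero] at hmm
          simp at hmm
          omega
        · have hp1 : (t+1) % 2 = 1 := by omega
          have hcnt : (ν.count (t+1)) % 2 = 0 := hc (t+1) (by omega)
          rw [hp1, Nat.mul_one] at hmm
          omega
      · rw [tau_ne_one hb1] at ihh ⊢
        have hb0 : b = 0 := by omega
        by_cases hp2 : (t+1) % 2 = 0
        · have hcnt : (ν.count (t+1)) % 2 = 0 := hc (t+1) (by omega)
          rw [hp2, Nat.mul_zero] at hmm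
          simp at hmm
          omega
        · have hp1 : (t+1) % 2 = 1 := by omega
          rw [hp1, Nat.mul_one] at hmm
          omega

/-- Key parity lemma: corners of partitions in P_X have partial sums of prescribed parity. -/
lemma KP {ν : Ptn} (hν : IsPartition ν) (hb : b ≤ 1) (hc : CountEven b ν)
    {j : ℕ} (hj : 1 ≤ j) (hcorner : pt ν (j+1) < pt ν j) :
    psum ν j % 2 = tau b j := by
  set t := pt ν (j+1) with hts
  have hjh : j = height ν (t+1) := by
    have h1 : j ≤ height ν (t+1) := by
      have : t + 1 ≤ pt ν j := by omega
      exact (pt_galois ν (by omega) hj).mp this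
    have h2 : height ν (t+1) ≤ j := by
      by_contra hcz
      have : j + 1 ≤ height ν (t+1) := by omega
      have := (pt_galois ν (by omega : 1 ≤ t+1) (by omega : 1 ≤ j+1)).mpr this
      omega
    omega
  rw [hjh]
  exact KPaux hν hb hc t

/-- converse: if all corners have prescribed parity then counts of bad parts are even -/
lemma InP_of_corners {m : Ptn} (hm : IsPartition m) (hb : b ≤ 1)
    (hcor : ∀ j, 1 ≤ j → pt m (j+1) < pt m j → psum m j % 2 = tau b j) :
    CountEven b m := by
  intro a hab
  rcases Nat.eq_zero_or_pos a with rfl | hap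
  · have : m.count 0 = 0 := by
      rw [Multiset.count_eq_zero]
      intro hc
      exact absurd (hm 0 hc) (by omega)
    omega
  set j1 := height m (a+1) with hj1
  set j2 := height m a with hj2
  have hle : j1 ≤ j2 := height_mono m (by omega)
  have hcount : j2 = j1 + m.count a := by
    have := height_succ_add_count m a
    omega
  rcases Nat.eq_or_lt_of_le hle with heq | hlt
  · omega
  · -- corner at j2 and (j1 or j1 = 0)
    have hptj2 : pt m j2 = a := by
      apply pt_between hap (by omega) (by omega)
    have hptj2s : pt m (j2+1) < a := by
      have : ¬ (a ≤ pt m (j2+1)) := by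
        intro hcz
        have := (pt_galois m hap (by omega : 1 ≤ j2 + 1)).mp hcz
        omega
      omega
    have hc2 : psum m j2 % 2 = tau b j2 := by
      apply hcor j2 (by omega)
      omega
    have hc1 : psum m j1 % 2 = tau b j1 := by
      rcases Nat.eq_zero_or_pos j1 with heq0 | hj1p
      · rw [heq0, psum_zero, tau_zero]
      · apply hcor j1 hj1p
        have hp1 : a + 1 ≤ pt m j1 := (pt_galois m (by omega) hj1p).mpr (by omega)
        have hp2 : pt m (j1+1) = a := pt_between hap (by omega) (by omega)
        omega
    have hrun : psum m j2 = psum m j1 + (j2 - j1) * a := by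
      apply psum_run hle
      intro i hi1 hi2
      exact pt_between hap hi1 hi2
    have hmm := Nat.mul_mod (j2 - j1) a 2
    by_cases hb1 : b = 1
    · subst hb1
      rw [tau_one_eq] at hc1 hc2
      rw [hab, Nat.mul_one] at hmm
      omega
    · have hb0 : b = 0 := by omega
      rw [tau_ne_one hb1] at hc1 hc2
      rw [hab, hb0, Nat.mul_zero] at hmm
      simp at hmm
      omega

end ColProps

-- ===== S8: col is the collapse =====

section ColMax

variable {b : ℕ} {l : Ptn}

lemma corner_col (hl : IsPartition l) (hb : b ≤ 1) (hpar : b = 1 → l.sum % 2 = 0)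
    {j : ℕ} (hj : 1 ≤ j) (hcorner : colD b l (j+1) < colD b l j) :
    F b l j % 2 = tau b j := by
  obtain ⟨k, rfl⟩ : ∃ k, j = k + 1 := ⟨j - 1, by omega⟩
  have htl := tau_le_one b (k+1)
  have hep := eps_le_psum hb l (k+1)
  rcases Nat.eq_zero_or_pos (eps b l (k+1)) with he | he
  · by_cases hmatch : psum l (k+1) % 2 = tau b (k+1)
    · unfold F
      omega
    · -- exception case
      have hexc := (eps_eq_zero_iff b l (k+1)).mp he
      simp only [show k+1+1 = k+2 from rfl] at hexc
      rcases hexc with hm | ⟨hexc1, hexc2⟩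
      · exact absurd hm hmatch
      exfalso
      have hbad2 : pt l (k+2) % 2 = b := by rw [← hexc1]; exact hexc2
      have hflip2 := mismatch_flip hb (k+1) hbad2
      simp only [show k+1+1 = k+2 from rfl] at hflip2
      have hE2 : eps b l (k+2) = 0 := by
        rw [eps_eq_zero_iff]
        left
        by_contra hcz
        exact hmatch (hflip2.mpr hcz)
      have hE0 : eps b l k = 0 := by
        rw [eps_eq_zero_iff]
        left
        exact (mismatch_flip hb k hexc2).mpr hmatch
      have hs1 := psum_succ l k
      have hs2 := psum_succ l (k+1)
      simp only [show k+1+1 = k+2 from rfl] at hs2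
      unfold colD F at hcorner
      simp only [Nat.add_sub_cancel, show k+2-1 = k+1 from rfl, show k+1+1 = k+2 from rfl] at hcorner
      have hm1 := pt_mono l (show k+1 ≤ k+2 by omega)
      have hepk := eps_le_psum hb l k
      omega
  · have h1 : eps b l (k+1) = 1 := by
      have := eps_le_one b l (k+1)
      omega
    have hmis := ((eps_eq_one_iff b l (k+1)).mp h1).1
    unfold F
    omega

lemma countEven_col (hl : IsPartition l) (hb : b ≤ 1) (hpar : b = 1 → l.sum % 2 = 0) :
    CountEven b (col b l) := by
  apply InP_of_corners (col_isPartition b l) hb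
  intro j hj hcor
  rw [psum_col hl hb hpar]
  apply corner_col hl hb hpar hj
  rw [pt_col hl hb hpar (by omega : 1 ≤ j + 1), pt_col hl hb hpar hj] at hcor
  exact hcor

lemma col_max (hl : IsPartition l) (hb : b ≤ 1) (hpar : b = 1 → l.sum % 2 = 0)
    {ν : Ptn} (hν : IsPartition ν) (hce : CountEven b ν)
    (hdom : Dom ν l) : Dom ν (col b l) := by
  intro j0
  rw [psum_col hl hb hpar]
  by_contra hc
  push_neg at hc
  have hj1 : 1 ≤ j0 := by
    by_contra hz
    have : j0 = 0 := by omega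
    subst this
    rw [F_zero] at hc
    have := psum_zero ν
    omega
  have hP : psum ν j0 = psum l j0 ∧ eps b l j0 = 1 := by
    have := hdom j0
    have := eps_le_one b l j0
    unfold F at hc
    omega
  have hprop : ∀ k, j0 ≤ k → (psum ν k = psum l k ∧ eps b l k = 1) := by
    intro k hk
    induction k, hk using Nat.le_induction with
    | base => exact hP
    | succ m hm ih =>
      obtain ⟨hpe, he1⟩ := ih
      have hm1 : 1 ≤ m := by omega
      obtain ⟨hmis, hexc⟩ := (eps_eq_one_iff b l m).mp he1
      -- ν has no corner at m
      have hnoc : pt ν (m+1) = pt ν m := by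
        have hmono := pt_mono ν (show m ≤ m+1 by omega)
        rcases Nat.eq_or_lt_of_le hmono with h | h
        · omega
        · exfalso
          have := KP hν hb hce hm1 h
          omega
      obtain ⟨k', rfl⟩ : ∃ k', m = k' + 1 := ⟨m - 1, by omega⟩
      have d0 := psum_succ ν k'
      have d0' := psum_succ l k'
      have d1 := psum_succ ν (k'+1)
      have d1' := psum_succ l (k'+1)
      simp only [show k'+1+1 = k'+2 from rfl] at d1 d1' hnoc hexc
      have hd0 := hdom k'
      have hd1 := hdom (k'+2)
      have hmono := pt_mono l (show k'+1 ≤ k'+2 by omega)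
      -- chain: pt l m ≤ pt ν m = pt ν (m+1) ≤ pt l (m+1) ≤ pt l m
      have hc1 : pt l (k'+1) ≤ pt ν (k'+1) := by omega
      have hc2 : pt ν (k'+2) ≤ pt l (k'+2) := by omega
      have hall : pt l (k'+1) = pt l (k'+2) ∧ pt ν (k'+2) = pt l (k'+2) := by omega
      have hgood : pt l (k'+1) % 2 ≠ b := fun hq => hexc ⟨by omega, hq⟩
      have hpe' : psum ν (k'+2) = psum l (k'+2) := by omega
      have hshift := mismatch_shift hb (k'+1) (show pt l (k'+2) % 2 ≠ b by omega)
      simp only [show k'+1+1 = k'+2 from rfl] at hshift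
      refine ⟨hpe', ?_⟩
      rw [eps_eq_one_iff]
      constructor
      · intro hmm
        exact hmis (hshift.mpr hmm)
      · rintro ⟨hq1, hq2⟩
        apply hgood
        rw [hall.1]
        exact hq2
  -- contradiction at a large index
  set K := max j0 (l.sum + 1) with hK
  have hbig := hprop K (by omega)
  have hz : pt l K = 0 := pt_zero_of_large hl (by omega)
  have : eps b l K = 0 := eps_eq_zero_of_pt_zero hl hb hpar (by omega) hz
  omega

end ColMax

-- ===== S9: the collapse function =====

def bX : PType → ℕ
  | PType.C => 1
  | _ => 0

lemma bX_le_one (X : PType) : bX X ≤ 1 := by cases X <;> simp [bX]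

lemma badPart_iff (X : PType) (a : ℕ) : badPart X a ↔ a % 2 = bX X := by
  cases X <;> simp [badPart, bX, Nat.even_iff, Nat.odd_iff]

lemma InP_iff (X : PType) (m : Ptn) :
    InP X m ↔ (IsPartition m ∧ CountEven (bX X) m) := by
  unfold InP CountEven
  constructor
  · rintro ⟨h1, h2⟩
    refine ⟨h1, fun a ha => ?_⟩
    have := h2 a ((badPart_iff X a).mpr ha)
    rw [Nat.even_iff] at this
    exact this
  · rintro ⟨h1, h2⟩
    refine ⟨h1, fun a ha => ?_⟩
    rw [Nat.even_iff]
    exact h2 a ((badPart_iff X a).mp ha)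

lemma isCollapse_col {X : PType} {l : Ptn} (hl : IsPartition l)
    (hpar : bX X = 1 → l.sum % 2 = 0) : IsCollapse X l (col (bX X) l) := by
  have hb := bX_le_one X
  refine ⟨?_, sum_col hl hb hpar, dom_col hl hb hpar, ?_⟩
  · rw [InP_iff]
    exact ⟨col_isPartition _ _, countEven_col hl hb hpar⟩
  · intro ν hν hνs hνd
    rw [InP_iff] at hν
    exact col_max hl hb hpar hν.1 hν.2 hνd

lemma isCollapse_unique {X : PType} {l m m' : Ptn}
    (h1 : IsCollapse X l m) (h2 : IsCollapse X l m') : m = m' := by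
  obtain ⟨hm1, hs1, hd1, hmax1⟩ := h1
  obtain ⟨hm2, hs2, hd2, hmax2⟩ := h2
  have d12 : Dom m m' := hmax2 m hm1 hs1 hd1
  have d21 : Dom m' m := hmax1 m' hm2 hs2 hd2
  apply ext_of_psum ((InP_iff X m).mp hm1).1 ((InP_iff X m').mp hm2).1
  intro j
  exact le_antisymm (d12 j) (d21 j)

lemma collapse_eq {X : PType} {l m : Ptn} (h : IsCollapse X l m) :
    collapse X l = m := by
  have hd : CollapseDefined X l := ⟨m, h⟩
  unfold collapse
  rw [dif_pos hd]
  exact isCollapse_unique hd.choose_spec h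

lemma collapse_col_eq {X : PType} {l : Ptn} (hl : IsPartition l)
    (hpar : bX X = 1 → l.sum % 2 = 0) : collapse X l = col (bX X) l :=
  collapse_eq (isCollapse_col hl hpar)

-- ===== S10: pair-parity helpers =====

lemma pt_le_max {l : Ptn} {i : ℕ} (hi : 1 ≤ i) : pt l i ≤ maxPart l := by
  rcases Nat.eq_zero_or_pos (pt l i) with h | h
  · omega
  · have h1 : i ≤ height l (pt l i) := (pt_galois l h hi).mp (le_refl _)
    exact height_pos_le_max (by omega)

/-- count of transpose = difference of parts -/
lemma count_transpose {m : Ptn} {a : ℕ} (ha : 1 ≤ a) :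
    (transpose m).count a + pt m (a+1) = pt m a := by
  have h := height_succ_add_count (transpose m) a
  unfold pt
  omega

lemma countEven_transpose_of_pairs {b : ℕ} {m : Ptn}
    (hpair : ∀ a, 1 ≤ a → a % 2 = b → pt m a % 2 = pt m (a+1) % 2) (hb : b ≤ 1) :
    CountEven b (transpose m) := by
  intro a hab
  rcases Nat.eq_zero_or_pos a with rfl | hap
  · have : (transpose m).count 0 = 0 := by
      rw [Multiset.count_eq_zero]
      intro hc
      exact absurd (transpose_isPartition m 0 hc) (by omega)
    omega
  · have h1 := count_transpose (m := m) hap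
    have h2 := hpair a hap hab
    omega

lemma pairs_of_countEven {b : ℕ} {κ : Ptn} (hκ : IsPartition κ)
    (hce : CountEven b κ) {a : ℕ} (ha : 1 ≤ a) (hab : a % 2 = b) :
    pt (transpose κ) a % 2 = pt (transpose κ) (a+1) % 2 := by
  have h1 := count_transpose (m := transpose κ) ha
  rw [transpose_transpose hκ] at h1
  have h2 := hce a hab
  omega

/-- for a partition with odd-pairs parity (b=1 setting), even partial sums are even -/
lemma psum_even_of_pairs1 {η : Ptn}
    (hpair : ∀ a, 1 ≤ a → a % 2 = 1 → pt η a % 2 = pt η (a+1) % 2) :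
    ∀ j, j % 2 = 0 → psum η j % 2 = 0 := by
  intro j
  induction j using Nat.strong_induction_on with
  | _ j ih =>
    intro hj
    match j, hj with
    | 0, _ => simp [psum_zero]
    | (k+2), hj =>
      have ihk := ih k (by omega) (by omega)
      have h1 := psum_succ η k
      have h2 := psum_succ η (k+1)
      have h3 := hpair (k+1) (by omega) (by omega)
      simp only [show k+1+1 = k+2 from rfl] at h2 h3
      omega

/-- for a partition with even-pairs parity (b=0 setting), odd partial sums ≡ first part -/
lemma psum_odd_of_pairs0 {η : Ptn}
    (hpair : ∀ a, 1 ≤ a → a % 2 = 0 → pt η a % 2 = pt η (a+1) % 2) :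
    ∀ j, j % 2 = 1 → psum η j % 2 = pt η 1 % 2 := by
  intro j
  induction j using Nat.strong_induction_on with
  | _ j ih =>
    intro hj
    match j, hj with
    | 1, _ =>
      have h1 := psum_succ η 0
      simp only [show (0:ℕ)+1 = 1 from rfl] at h1
      have h0 := psum_zero η
      omega
    | (k+2), hj =>
      have ihk := ih k (by omega) (by omega)
      have h1 := psum_succ η k
      have h2 := psum_succ η (k+1)
      have h3 := hpair (k+1) (by omega) (by omega)
      simp only [show k+1+1 = k+2 from rfl] at h2 h3
      omega

/-- card parity for b = 0 partitions -/
lemma card_parity0 {ν : Ptn} (hν : IsPartition ν) (hce : CountEven 0 ν) :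
    height ν 1 % 2 = ν.sum % 2 := by
  have key : ∀ m : ℕ, (∑ a ∈ Finset.Icc 1 (2*m+1), height ν a) % 2 = height ν 1 % 2 := by
    intro m
    induction m with
    | zero => simp
    | succ k ih =>
      have hstep : ∑ a ∈ Finset.Icc 1 (2*(k+1)+1), height ν a
          = ∑ a ∈ Finset.Icc 1 (2*k+1), height ν a + height ν (2*k+2) + height ν (2*k+3) := by
        rw [show 2*(k+1)+1 = (2*k+2)+1 from by ring]
        rw [Finset.sum_Icc_succ_top (by omega : 1 ≤ (2*k+2)+1)]
        rw [Finset.sum_Icc_succ_top (by omega : 1 ≤ 2*k+2)]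
      have hpar : (height ν (2*k+2) + height ν (2*k+3)) % 2 = 0 := by
        have hc := height_succ_add_count ν (2*k+2)
        have he := hce (2*k+2) (by omega)
        simp only [show (2*k+2)+1 = 2*k+3 from rfl] at hc
        omega
      rw [hstep]
      omega
  set m := ν.sum with hm
  have hK : ν.sum ≤ 2*m+1 := by omega
  have := sum_eq_sum_heights hK
  have := key m
  omega

/-- psum equals j * maxPart for j up to the multiplicity of the max -/
lemma psum_head {l : Ptn} {j : ℕ} (hj : j ≤ height l (maxPart l)) :
    psum l j = j * maxPart l := by
  have := psum_run (ν := l) (j1 := 0) (j2 := j) (c := maxPart l) (by omega) ?_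
  · rw [psum_zero] at this
    simp only [Nat.sub_zero] at this
    omega
  · intro i hi1 hi2
    have h1 : maxPart l ≤ pt l i := by
      rcases Nat.eq_zero_or_pos (maxPart l) with h0 | h0
      · omega
      · exact (pt_galois l h0 (by omega)).mpr (by omega)
    have h2 := pt_le_max (l := l) (show 1 ≤ i by omega)
    omega

-- ===== S11: psum of transformed partitions =====

lemma sum_heights_eq_psum {l : Ptn} (hl : IsPartition l) (j : ℕ) :
    ∑ i ∈ Finset.Icc 1 j, height (transpose l) i = psum l j := by
  have h := psum_transpose (transpose_isPartition l) j
  rw [transpose_transpose hl] at h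
  exact h.symm

lemma psum_lowerStar {l : Ptn} (hl : IsPartition l) (hne : l ≠ 0) (j : ℕ) :
    psum (transpose (down (transpose l))) j
      + (if height l (maxPart l) ≤ j then 1 else 0) = psum l j := by
  have hT : IsPartition (transpose l) := transpose_isPartition l
  have hTne : transpose l ≠ 0 := transpose_ne_zero hl hne
  have hdp : IsPartition (down (transpose l)) := down_isPartition hT
  rw [psum_transpose hdp]
  set R := height l (maxPart l) with hR
  have hmin : minPart (transpose l) = R := minPart_transpose hl hne
  have hRpos : 1 ≤ R := height_maxPart_pos hne
  have key : ∀ i ∈ Finset.Icc 1 j,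
      height (down (transpose l)) i + (if i = R then 1 else 0) = height (transpose l) i := by
    intro i hi
    rw [Finset.mem_Icc] at hi
    have := height_down hT hTne (show 1 ≤ i by omega)
    rw [hmin] at this
    exact this
  have hs := sum_ind key
  have h2 : ∑ i ∈ Finset.Icc 1 j, height (transpose l) i = psum l j :=
    sum_heights_eq_psum hl j
  by_cases hRj : R ≤ j
  · rw [if_pos hRj]
    rw [if_pos (Finset.mem_Icc.mpr ⟨hRpos, hRj⟩)] at hs
    omega
  · rw [if_neg hRj]
    rw [if_neg (fun hc => hRj (Finset.mem_Icc.mp hc).2)] at hs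
    omega

lemma psum_upStar {l : Ptn} (hl : IsPartition l) (j : ℕ) :
    psum (transpose (up (transpose l))) j
      = psum l j + (if height l 1 + 1 ≤ j then 1 else 0) := by
  have hT : IsPartition (transpose l) := transpose_isPartition l
  have hup : IsPartition (up (transpose l)) := up_isPartition hT
  rw [psum_transpose hup]
  set R := height l 1 + 1 with hR
  have hmax : maxPart (transpose l) + 1 = R := by
    rw [maxPart_transpose hl]
  have key : ∀ i ∈ Finset.Icc 1 j,
      height (transpose l) i + (if i = R then 1 else 0) = height (up (transpose l)) i := by
    intro i hi
    rw [Finset.mem_Icc] at hi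
    have := height_up hT (show 1 ≤ i by omega)
    rw [hmax] at this
    omega
  have hs := sum_ind key
  have h2 : ∑ i ∈ Finset.Icc 1 j, height (transpose l) i = psum l j := sum_heights_eq_psum hl j
  by_cases hRj : R ≤ j
  · rw [if_pos hRj]
    rw [if_pos (Finset.mem_Icc.mpr ⟨by omega, hRj⟩)] at hs
    omega
  · rw [if_neg hRj]
    rw [if_neg (fun hc => hRj (Finset.mem_Icc.mp hc).2)] at hs
    omega

lemma psum_downUp {l : Ptn} (hl : IsPartition l) (j : ℕ) :
    psum (transpose (down (up l))) j + (if minPart (up l) ≤ j then 1 else 0)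
      = psum (transpose l) j + (if maxPart l + 1 ≤ j then 1 else 0) := by
  have hup : IsPartition (up l) := up_isPartition hl
  have hupne : up l ≠ 0 := by
    unfold up
    exact Multiset.cons_ne_zero
  have hdu : IsPartition (down (up l)) := down_isPartition hup
  rw [psum_transpose hdu, psum_transpose hl]
  set v := minPart (up l) with hv
  have hvpos : 1 ≤ v := minPart_pos hup hupne
  set R := maxPart l + 1 with hR
  have key1 : ∀ i ∈ Finset.Icc 1 j,
      height (down (up l)) i + (if i = v then 1 else 0) = height (up l) i := by
    intro i hi
    rw [Finset.mem_Icc] at hi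
    exact height_down hup hupne (show 1 ≤ i by omega)
  have key2 : ∀ i ∈ Finset.Icc 1 j,
      height l i + (if i = R then 1 else 0) = height (up l) i := by
    intro i hi
    rw [Finset.mem_Icc] at hi
    have := height_up hl (show 1 ≤ i by omega)
    rw [← hR] at this
    omega
  have hs1 := sum_ind key1
  have hs2 := sum_ind key2
  by_cases hvj : v ≤ j
  · rw [if_pos hvj]
    rw [if_pos (Finset.mem_Icc.mpr ⟨hvpos, hvj⟩)] at hs1
    by_cases hRj : R ≤ j
    · rw [if_pos hRj]
      rw [if_pos (Finset.mem_Icc.mpr ⟨by omega, hRj⟩)] at hs2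
      omega
    · rw [if_neg hRj]
      rw [if_neg (fun hc => hRj (Finset.mem_Icc.mp hc).2)] at hs2
      omega
  · rw [if_neg hvj]
    rw [if_neg (fun hc => hvj (Finset.mem_Icc.mp hc).2)] at hs1
    by_cases hRj : R ≤ j
    · rw [if_pos hRj]
      rw [if_pos (Finset.mem_Icc.mpr ⟨by omega, hRj⟩)] at hs2
      omega
    · rw [if_neg hRj]
      rw [if_neg (fun hc => hRj (Finset.mem_Icc.mp hc).2)] at hs2
      omega

/-- even-index partial sums for even-pairs (b=0) partitions -/
lemma psum_even_of_pairs0 {η : Ptn}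
    (hpair : ∀ a, 1 ≤ a → a % 2 = 0 → pt η a % 2 = pt η (a+1) % 2) :
    ∀ j, 2 ≤ j → j % 2 = 0 → psum η j % 2 = (pt η 1 + pt η j) % 2 := by
  intro j
  induction j using Nat.strong_induction_on with
  | _ j ih =>
    intro hj2 hj
    match j, hj2, hj with
    | 2, _, _ =>
      have h1 := psum_succ η 0
      have h2 := psum_succ η 1
      simp only [show (0:ℕ)+1 = 1 from rfl, show (1:ℕ)+1 = 2 from rfl] at h1 h2
      have h0 := psum_zero η
      omega
    | (k+3), _, hj =>
      have ihk := ih (k+1) (by omega) (by omega) (by omega)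
      have h1 := psum_succ η (k+1)
      have h2 := psum_succ η (k+2)
      have h3 := hpair (k+1) (by omega) (by omega)
      simp only [show k+1+1 = k+2 from rfl, show k+2+1 = k+3 from rfl] at h1 h2 h3
      omega

-- ===== S12: Identity (i) =====

section IdI

variable {lam : Ptn}

/-- exceptional position at even index forces even partial sum (type C collapse of λ⁻, λ ∈ P_B) -/
lemma I_noMixed (hlam : IsPartition lam) (hCE : CountEven 0 lam) (hne : lam ≠ 0)
    {j : ℕ} (hj : 1 ≤ j) (hje : j % 2 = 0)
    (hexc : pt (down lam) j = pt (down lam) (j+1)) (hoddc : pt (down lam) j % 2 = 1) :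
    psum (down lam) j % 2 = 0 := by
  have hc1 : 1 ≤ pt (down lam) j := by omega
  have hj1L : j + 1 ≤ height (down lam) 1 := by
    have : 1 ≤ pt (down lam) (j+1) := by omega
    exact (pt_pos_iff (by omega)).mp this
  have hdL : height (down lam) 1 + (if 1 = minPart lam then 1 else 0) = height lam 1 :=
    height_down hlam hne (le_refl 1)
  have hjL : j + 1 ≤ height lam 1 := by split_ifs at hdL <;> omega
  have hptj := pt_down hlam hne (show 1 ≤ j by omega)
  have hptj1 := pt_down hlam hne (show 1 ≤ j + 1 by omega)
  rw [if_neg (show ¬ j = height lam 1 by omega)] at hptj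
  rcases eq_or_ne (j+1) (height lam 1) with hL | hL
  · exfalso
    rw [if_pos hL] at hptj1
    have := pt_mono lam (show j ≤ j + 1 by omega)
    omega
  · rw [if_neg hL] at hptj1
    have hpj : pt lam j = pt (down lam) j := by omega
    have hpj1 : pt lam (j+1) = pt (down lam) j := by omega
    have hJj : height lam (pt (down lam) j + 1) < j := by
      by_contra hcon
      have : j ≤ height lam (pt (down lam) j + 1) := by omega
      have := (pt_galois lam (show 1 ≤ pt (down lam) j + 1 by omega) hj).mpr this
      omega
    have hjH : j ≤ height lam (pt (down lam) j) := (pt_galois lam hc1 hj).mp (by omega)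
    have hrun : psum lam j = psum lam (height lam (pt (down lam) j + 1))
        + (j - height lam (pt (down lam) j + 1)) * (pt (down lam) j) := by
      apply psum_run (by omega)
      intro i h1 h2
      exact pt_between hc1 h1 (by omega)
    have hcorner : psum lam (height lam (pt (down lam) j + 1)) % 2
        = (height lam (pt (down lam) j + 1)) % 2 := by
      rcases Nat.eq_zero_or_pos (height lam (pt (down lam) j + 1)) with h0 | hJp
      · rw [h0, psum_zero]
      · have hKP := KP hlam (by omega : (0:ℕ) ≤ 1) hCE hJp ?_
        · rw [tau_ne_one (by omega)] at hKP
          exact hKP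
        · have ha : pt lam (height lam (pt (down lam) j + 1) + 1) = pt (down lam) j :=
            pt_between hc1 (by omega) (by omega)
          have hb2 : pt (down lam) j + 1 ≤ pt lam (height lam (pt (down lam) j + 1)) :=
            (pt_galois lam (by omega) hJp).mpr (by omega)
          omega
    have hmul := Nat.mul_mod (j - height lam (pt (down lam) j + 1)) (pt (down lam) j) 2
    rw [hoddc, Nat.mul_one] at hmul
    have hpd := psum_down hlam hne j
    rw [if_neg (by omega)] at hpd
    omega

lemma maxPart_pos {l : Ptn} (hl : IsPartition l) (hne : l ≠ 0) : 1 ≤ maxPart l := by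
  obtain ⟨x, hx⟩ := Multiset.exists_mem_of_ne_zero hne
  have := hl x hx
  have := le_maxPart hx
  omega

lemma I_eps_range (hlam : IsPartition lam) (hCE : CountEven 0 lam)
    (hoddn : lam.sum % 2 = 1) (hne : lam ≠ 0)
    {j : ℕ} (he : eps 1 (down lam) j = 1) :
    height lam (maxPart lam) ≤ j ∧ j < height lam 1 := by
  have hj1 : 1 ≤ j := by
    by_contra h0
    have : j = 0 := by omega
    rw [this, eps_zero] at he
    omega
  have hM1 : 1 ≤ maxPart lam := maxPart_pos hlam hne
  have hr1 : 1 ≤ height lam (maxPart lam) := height_maxPart_pos hne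
  have hrL : height lam (maxPart lam) ≤ height lam 1 := height_mono lam hM1
  obtain ⟨hmis, hexc⟩ := (eps_eq_one_iff 1 (down lam) j).mp he
  rw [tau_one_eq] at hmis
  have hpd := psum_down hlam hne j
  have hjL : j < height lam 1 := by
    by_contra hcon
    rw [if_pos (by omega)] at hpd
    have : psum lam j = lam.sum := psum_eq_sum_of_card (by omega)
    omega
  rw [if_neg (by omega)] at hpd
  refine ⟨?_, hjL⟩
  by_contra hcon
  have hjr : j + 1 ≤ height lam (maxPart lam) := by omega
  have hptM : ∀ i, 1 ≤ i → i ≤ height lam (maxPart lam) → pt lam i = maxPart lam := by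
    intro i hi1 hi2
    have h1 : maxPart lam ≤ pt lam i := (pt_galois lam hM1 hi1).mpr (by omega)
    have h2 := pt_le_max (l := lam) hi1
    omega
  have hpthd : psum lam j = j * maxPart lam := psum_head (by omega)
  have hmul := Nat.mul_mod j (maxPart lam) 2
  by_cases hMe : maxPart lam % 2 = 0
  · rw [hMe, Nat.mul_zero] at hmul
    omega
  · have hMo : maxPart lam % 2 = 1 := by omega
    rw [hMo, Nat.mul_one] at hmul
    by_cases hje : j % 2 = 0
    · omega
    · have hptj := pt_down hlam hne hj1
      rw [if_neg (by omega)] at hptj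
      have hpj : pt (down lam) j = maxPart lam := by
        have := hptM j hj1 (by omega)
        omega
      rcases eq_or_ne (j+1) (height lam 1) with hL | hL
      · have hn1 : psum lam (height lam 1) = lam.sum := psum_eq_sum_of_card (by omega)
        have hn2 : psum lam (height lam 1) = (height lam 1) * maxPart lam :=
          psum_head (by omega)
        have hmul2 := Nat.mul_mod (height lam 1) (maxPart lam) 2
        rw [hMo, Nat.mul_one] at hmul2
        omega
      · have hptj1 := pt_down hlam hne (show 1 ≤ j+1 by omega)
        rw [if_neg hL] at hptj1
        have hpj1 : pt (down lam) (j+1) = maxPart lam := by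
          have := hptM (j+1) (by omega) (by omega)
          omega
        exact hexc ⟨by omega, by omega⟩

lemma I_pairs (hlam : IsPartition lam) (hCE : CountEven 0 lam)
    (hoddn : lam.sum % 2 = 1) (hne : lam ≠ 0) :
    ∀ a, 1 ≤ a → a % 2 = 1 →
      colD 1 (down lam) a % 2 = colD 1 (down lam) (a+1) % 2 := by
  have hmu := down_isPartition hlam
  have hsd := sum_down hlam hne
  have hpar : (1:ℕ) = 1 → (down lam).sum % 2 = 0 := fun _ => by omega
  have claimF : ∀ j, j % 2 = 0 → F 1 (down lam) j % 2 = 0 := by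
    intro j hje
    rcases Nat.eq_zero_or_pos j with rfl | hj1
    · rw [F_zero]
    · rcases Nat.eq_zero_or_pos (eps 1 (down lam) j) with he | he
      · have hez := (eps_eq_zero_iff 1 (down lam) j).mp he
        rw [tau_one_eq] at hez
        rcases hez with hm | ⟨hexc, hoddc⟩
        · unfold F; omega
        · have := I_noMixed hlam hCE hne hj1 hje hexc hoddc
          unfold F; omega
      · have he1 : eps 1 (down lam) j = 1 := by
          have := eps_le_one 1 (down lam) j; omega
        obtain ⟨hmis, -⟩ := (eps_eq_one_iff 1 (down lam) j).mp he1
        rw [tau_one_eq] at hmis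
        have := eps_le_psum (show (1:ℕ) ≤ 1 from le_refl 1) (down lam) j
        unfold F; omega
  intro a ha hao
  obtain ⟨k, rfl⟩ : ∃ k, a = k + 1 := ⟨a - 1, by omega⟩
  have h1 := claimF k (by omega)
  have h2 := claimF (k+2) (by omega)
  have hm1 := F_mono_succ hmu (le_refl 1) hpar k
  have hm2 := F_mono_succ hmu (le_refl 1) hpar (k+1)
  unfold colD
  simp only [Nat.add_sub_cancel, show k+1+1 = k+2 from rfl, show k+2-1 = k+1 from rfl] at *
  omega

lemma I_key3 (hlam : IsPartition lam) (hCE : CountEven 0 lam)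
    (hoddn : lam.sum % 2 = 1) (hne : lam ≠ 0) (j : ℕ) :
    psum lam j ≤ F 1 (down lam) j
      + (if height lam (maxPart lam) ≤ j then 1 else 0) := by
  have hpd := psum_down hlam hne j
  have hrL : height lam (maxPart lam) ≤ height lam 1 :=
    height_mono lam (maxPart_pos hlam hne)
  rcases Nat.eq_zero_or_pos (eps 1 (down lam) j) with he | he
  · unfold F
    rw [he]
    split_ifs at hpd ⊢ <;> omega
  · have he1 : eps 1 (down lam) j = 1 := by
      have := eps_le_one 1 (down lam) j; omega
    obtain ⟨h1, h2⟩ := I_eps_range hlam hCE hoddn hne he1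
    unfold F
    rw [he1, if_pos h1]
    rw [if_neg (by omega)] at hpd
    have := eps_le_psum (le_refl 1) (down lam) j
    omega

lemma I_key4 (hlam : IsPartition lam) (hCE : CountEven 0 lam)
    (hoddn : lam.sum % 2 = 1) (hne : lam ≠ 0) {η : Ptn} (hη : IsPartition η)
    (hpair : ∀ a, 1 ≤ a → a % 2 = 1 → pt η a % 2 = pt η (a+1) % 2)
    (hdom : ∀ j, psum lam j ≤ psum η j
      + (if height lam (maxPart lam) ≤ j then 1 else 0)) :
    ∀ j, F 1 (down lam) j ≤ psum η j := by
  have hGev : ∀ jj, jj % 2 = 0 → psum η jj % 2 = 0 := psum_even_of_pairs1 hpair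
  have hr1 : 1 ≤ height lam (maxPart lam) := height_maxPart_pos hne
  have hrL : height lam (maxPart lam) ≤ height lam 1 :=
    height_mono lam (maxPart_pos hlam hne)
  intro j0
  by_contra hcon
  push_neg at hcon
  have hj01 : 1 ≤ j0 := by
    by_contra h0
    have : j0 = 0 := by omega
    rw [this, F_zero] at hcon
    omega
  have hpd := psum_down hlam hne j0
  have hd0 := hdom j0
  have he0 : eps 1 (down lam) j0 = 0 := by
    rcases Nat.eq_zero_or_pos (eps 1 (down lam) j0) with he | he
    · exact he
    · exfalso
      have he1 : eps 1 (down lam) j0 = 1 := by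
        have := eps_le_one 1 (down lam) j0; omega
      obtain ⟨h1, h2⟩ := I_eps_range hlam hCE hoddn hne he1
      rw [if_pos (by omega)] at hd0
      rw [if_neg (by omega)] at hpd
      unfold F at hcon
      omega
  have hFj : F 1 (down lam) j0 = psum (down lam) j0 := by
    unfold F; omega
  have hrange : height lam (maxPart lam) ≤ j0 ∧ j0 < height lam 1 := by
    constructor
    · by_contra hcz
      rw [if_neg (by omega)] at hd0
      split_ifs at hpd <;> omega
    · by_contra hcz
      rw [if_pos (by omega)] at hpd
      rw [if_pos (by omega)] at hd0
      omega
  rw [if_neg (by omega)] at hpd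
  rw [if_pos (by omega)] at hd0
  have hGj0 : psum η j0 + 1 = psum lam j0 := by omega
  obtain ⟨k0, rfl⟩ : ∃ k, j0 = k + 1 := ⟨j0 - 1, by omega⟩
  have hse1 := psum_succ η k0
  have hsl1 := psum_succ lam k0
  have hse2 := psum_succ η (k0+1)
  have hsl2 := psum_succ lam (k0+1)
  simp only [show k0+1+1 = k0+2 from rfl] at hse2 hsl2
  have hdk0 := hdom k0
  have hdk2 := hdom (k0+2)
  rw [if_pos (by omega)] at hdk2
  have hemono := pt_mono η (show k0+1 ≤ k0+2 by omega)
  by_cases hA : psum lam (k0+1) % 2 = 0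
  · -- case A : match
    have hj0odd : (k0+1) % 2 = 1 := by
      by_contra hcz
      have := hGev (k0+1) (by omega)
      omega
    have hnoc : pt lam (k0+2) = pt lam (k0+1) := by
      have hmono := pt_mono lam (show k0+1 ≤ k0+2 by omega)
      rcases Nat.eq_or_lt_of_le hmono with h | h
      · omega
      · exfalso
        have hKP := KP hlam (by omega : (0:ℕ) ≤ 1) hCE (show 1 ≤ k0+1 by omega)
          (by simp only [show k0+1+1 = k0+2 from rfl]; omega)
        rw [tau_ne_one (by omega)] at hKP
        omega
    have hηup : pt η (k0+1) ≤ pt lam (k0+1) := by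
      split_ifs at hdk0 <;> omega
    have hηodd : pt η (k0+1) % 2 = 1 := by
      have h1 := hGev k0 (by omega)
      omega
    have hηlow : pt lam (k0+2) ≤ pt η (k0+2) := by omega
    have hηeq1 : pt η (k0+1) = pt lam (k0+1) := by omega
    have hηeq2 : pt η (k0+2) = pt lam (k0+1) := by omega
    have hcodd : pt lam (k0+1) % 2 = 1 := by omega
    have hc1 : 1 ≤ pt lam (k0+1) := by omega
    have inv : ∀ i, k0+1 ≤ i → (pt lam i = pt lam (k0+1) ∧ pt η i = pt lam (k0+1) ∧
        psum η i + 1 = psum lam i ∧ psum lam i % 2 ≠ i % 2) := by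
      intro i hi
      induction i, hi using Nat.le_induction with
      | base => exact ⟨rfl, hηeq1, by omega, by omega⟩
      | succ i hi ih =>
        obtain ⟨ih1, ih2, ih3, ih4⟩ := ih
        have hnoc' : pt lam (i+1) = pt lam (k0+1) := by
          have hmono := pt_mono lam (show i ≤ i+1 by omega)
          rcases Nat.eq_or_lt_of_le hmono with h | h
          · omega
          · exfalso
            have hKP := KP hlam (by omega : (0:ℕ) ≤ 1) hCE (show 1 ≤ i by omega) h
            rw [tau_ne_one (by omega)] at hKP
            omega
        have hsei := psum_succ η i
        have hsli := psum_succ lam i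
        have hdi := hdom (i+1)
        rw [if_pos (by omega)] at hdi
        have hηl : pt lam (k0+1) ≤ pt η (i+1) := by omega
        have hηm := pt_mono η (show i ≤ i+1 by omega)
        refine ⟨hnoc', by omega, by omega, by omega⟩
    have hbig := inv (lam.sum + 1) (by
      have h1 := height_le_card lam 1
      have h2 := card_le_sum hlam
      omega)
    have := pt_zero_of_large hlam (show lam.sum + 1 ≤ lam.sum + 1 from le_refl _)
    omega
  · -- case B : exception
    have hexc : pt (down lam) (k0+1) = pt (down lam) (k0+2) ∧
        pt (down lam) (k0+1) % 2 = 1 := by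
      have hez := (eps_eq_zero_iff 1 (down lam) (k0+1)).mp he0
      rw [tau_one_eq] at hez
      simp only [show k0+1+1 = k0+2 from rfl] at hez
      rcases hez with hm | h
      · omega
      · exact h
    have hj0odd : (k0+1) % 2 = 1 := by
      by_contra hcz
      have := I_noMixed hlam hCE hne (show 1 ≤ k0+1 by omega) (by omega)
        (by simp only [show k0+1+1 = k0+2 from rfl]; exact hexc.1) hexc.2
      omega
    have hptd1 := pt_down hlam hne (show 1 ≤ k0+1 by omega)
    rw [if_neg (by omega)] at hptd1
    have hpl2 : pt lam (k0+2) = pt (down lam) (k0+1) := by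
      have hptd2 := pt_down hlam hne (show 1 ≤ k0+2 by omega)
      rcases eq_or_ne (k0+2) (height lam 1) with hL | hL
      · exfalso
        rw [if_pos hL] at hptd2
        have := pt_mono lam (show k0+1 ≤ k0+2 by omega)
        omega
      · rw [if_neg hL] at hptd2
        omega
    have hηup : pt η (k0+1) ≤ pt lam (k0+1) := by
      split_ifs at hdk0 <;> omega
    have hηev : pt η (k0+1) % 2 = 0 := by
      have h1 := hGev k0 (by omega)
      omega
    have hηlow : pt lam (k0+2) ≤ pt η (k0+2) := by omega
    omega

end IdI

-- ===== S13: Identity (i) assembly =====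

lemma identity_I {lam : Ptn} (hlam : IsPartition lam) (hCE : CountEven 0 lam)
    (hoddn : lam.sum % 2 = 1) :
    transpose (col 1 (down lam)) = col 1 (down (transpose lam)) := by
  have hne : lam ≠ 0 := by
    intro h
    rw [h] at hoddn
    simp at hoddn
  have hmu : IsPartition (down lam) := down_isPartition hlam
  have hTlam : IsPartition (transpose lam) := transpose_isPartition lam
  have hTne : transpose lam ≠ 0 := transpose_ne_zero hlam hne
  have hmu' : IsPartition (down (transpose lam)) := down_isPartition hTlam
  have hsd : (down lam).sum + 1 = lam.sum := sum_down hlam hne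
  have hsd' : (down (transpose lam)).sum + 1 = (transpose lam).sum := sum_down hTlam hTne
  have hts : (transpose lam).sum = lam.sum := transpose_sum lam
  have hpar : (1:ℕ) = 1 → (down lam).sum % 2 = 0 := fun _ => by omega
  have hpar' : (1:ℕ) = 1 → (down (transpose lam)).sum % 2 = 0 := fun _ => by omega
  have hm : IsPartition (col 1 (down lam)) := col_isPartition _ _
  have hm' : IsPartition (col 1 (down (transpose lam))) := col_isPartition _ _
  have hsm : (col 1 (down lam)).sum = (down lam).sum := sum_col hmu (le_refl 1) hpar
  have hsm' : (col 1 (down (transpose lam))).sum = (down (transpose lam)).sum :=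
    sum_col hmu' (le_refl 1) hpar'
  -- direction 1 : Dom (transpose (col 1 μ)) (col 1 μ')
  have hTmCE : CountEven 1 (transpose (col 1 (down lam))) := by
    apply countEven_transpose_of_pairs ?_ (le_refl 1)
    intro a ha hab
    rw [pt_col hmu (le_refl 1) hpar ha, pt_col hmu (le_refl 1) hpar (show 1 ≤ a+1 by omega)]
    exact I_pairs hlam hCE hoddn hne a ha hab
  have hdomTm : Dom (transpose (col 1 (down lam))) (down (transpose lam)) := by
    have h1 : Dom (transpose (down (transpose lam))) (col 1 (down lam)) := by
      intro j
      rw [psum_col hmu (le_refl 1) hpar]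
      have h2 := psum_lowerStar hlam hne j
      have h3 := I_key3 hlam hCE hoddn hne j
      split_ifs at h2 h3 <;> omega
    have hsums : (transpose (down (transpose lam))).sum = (col 1 (down lam)).sum := by
      rw [transpose_sum, hsm]
      omega
    have h4 := dom_transpose (transpose_isPartition _) hm hsums h1
    rw [transpose_transpose hmu'] at h4
    exact h4
  have hd1 : Dom (transpose (col 1 (down lam))) (col 1 (down (transpose lam))) :=
    col_max hmu' (le_refl 1) hpar' (transpose_isPartition _) hTmCE hdomTm
  -- direction 2 : Dom (col 1 μ') (transpose (col 1 μ))
  have hpair' : ∀ a, 1 ≤ a → a % 2 = 1 →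
      pt (transpose (col 1 (down (transpose lam)))) a % 2
        = pt (transpose (col 1 (down (transpose lam)))) (a+1) % 2 := by
    intro a ha hab
    exact pairs_of_countEven hm' (countEven_col hmu' (le_refl 1) hpar') ha hab
  have hdom' : ∀ j, psum lam j ≤ psum (transpose (col 1 (down (transpose lam)))) j
      + (if height lam (maxPart lam) ≤ j then 1 else 0) := by
    intro j
    have h1 : Dom (col 1 (down (transpose lam))) (down (transpose lam)) :=
      dom_col hmu' (le_refl 1) hpar'
    have hsums : (col 1 (down (transpose lam))).sum = (down (transpose lam)).sum := hsm'
    have h2 := dom_transpose hm' hmu' hsums h1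
    have h3 := h2 j
    have h4 := psum_lowerStar hlam hne j
    split_ifs at h4 ⊢ <;> omega
  have hd2F : ∀ j, F 1 (down lam) j ≤ psum (transpose (col 1 (down (transpose lam)))) j :=
    I_key4 hlam hCE hoddn hne (transpose_isPartition _) hpair' hdom'
  have hd2 : Dom (col 1 (down (transpose lam))) (transpose (col 1 (down lam))) := by
    have h1 : Dom (col 1 (down lam)) (transpose (col 1 (down (transpose lam)))) := by
      intro j
      rw [psum_col hmu (le_refl 1) hpar]
      exact hd2F j
    have hsums : (col 1 (down lam)).sum = (transpose (col 1 (down (transpose lam)))).sum := by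
      rw [transpose_sum, hsm, hsm']
      omega
    have h2 := dom_transpose hm (transpose_isPartition _) hsums h1
    rw [transpose_transpose hm'] at h2
    exact h2
  exact ext_of_psum (transpose_isPartition _) hm'
    (fun j => le_antisymm (hd1 j) (hd2 j))

-- ===== S14: Identity (ii) =====

section IdII

variable {lam : Ptn}

lemma II_noMixed (hlam : IsPartition lam) (hCE : CountEven 1 lam) (hev : lam.sum % 2 = 0)
    {j : ℕ} (hj : 1 ≤ j) (hjo : j % 2 = 1)
    (hexc : pt (up lam) j = pt (up lam) (j+1)) (hevc : pt (up lam) j % 2 = 0) :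
    psum (up lam) j % 2 = j % 2 := by
  have hpu := psum_up hlam j
  rw [if_pos hj] at hpu
  rcases Nat.eq_zero_or_pos (pt (up lam) j) with hc0 | hc1
  · -- c = 0 : stabilized, psum = sum + 1 odd
    have hst : psum (up lam) j = (up lam).sum := psum_stab (up lam) hj hc0
    have hsu := sum_up lam
    omega
  · -- c ≥ 1
    have hj2 : 2 ≤ j := by
      by_contra hcz
      have hj1 : j = 1 := by omega
      subst hj1
      simp only [show (1:ℕ)+1 = 2 from rfl] at hexc
      have h1 := pt_up hlam (le_refl 1)
      have h2 := pt_up hlam (show 1 ≤ 2 by omega)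
      rw [if_pos rfl] at h1
      rw [if_neg (by omega)] at h2
      have h3 := pt_mono lam (show 1 ≤ 2 by omega)
      omega
    have hp1 := pt_up hlam (show 1 ≤ j by omega)
    have hp2 := pt_up hlam (show 1 ≤ j+1 by omega)
    rw [if_neg (by omega)] at hp1
    rw [if_neg (by omega)] at hp2
    -- pt lam j = pt lam (j+1) = c
    have hpj : pt lam j = pt (up lam) j := by omega
    have hpj1 : pt lam (j+1) = pt (up lam) j := by omega
    have hJj : height lam (pt (up lam) j + 1) < j := by
      by_contra hcon
      have : j ≤ height lam (pt (up lam) j + 1) := by omega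
      have := (pt_galois lam (show 1 ≤ pt (up lam) j + 1 by omega) (show 1 ≤ j by omega)).mpr this
      omega
    have hjH : j ≤ height lam (pt (up lam) j) := (pt_galois lam hc1 (show 1 ≤ j by omega)).mp (by omega)
    have hrun : psum lam j = psum lam (height lam (pt (up lam) j + 1))
        + (j - height lam (pt (up lam) j + 1)) * (pt (up lam) j) := by
      apply psum_run (by omega)
      intro i h1 h2
      exact pt_between hc1 h1 (by omega)
    have hcorner : psum lam (height lam (pt (up lam) j + 1)) % 2 = 0 := by
      rcases Nat.eq_zero_or_pos (height lam (pt (up lam) j + 1)) with h0 | hJp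
      · rw [h0, psum_zero]
      · have hKP := KP hlam (le_refl 1) hCE hJp ?_
        · rw [tau_one_eq] at hKP
          exact hKP
        · have ha : pt lam (height lam (pt (up lam) j + 1) + 1) = pt (up lam) j :=
            pt_between hc1 (by omega) (by omega)
          have hb2 : pt (up lam) j + 1 ≤ pt lam (height lam (pt (up lam) j + 1)) :=
            (pt_galois lam (by omega) hJp).mpr (by omega)
          omega
    have hmul := Nat.mul_mod (j - height lam (pt (up lam) j + 1)) (pt (up lam) j) 2
    rw [hevc, Nat.mul_zero] at hmul
    omega

lemma II_claimF (hlam : IsPartition lam) (hCE : CountEven 1 lam) (hev : lam.sum % 2 = 0) :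
    ∀ j, j % 2 = 1 → F 0 (up lam) j % 2 = 1 := by
  intro j hjo
  have hj1 : 1 ≤ j := by omega
  rcases Nat.eq_zero_or_pos (eps 0 (up lam) j) with he | he
  · have hez := (eps_eq_zero_iff 0 (up lam) j).mp he
    rw [tau_ne_one (by omega)] at hez
    rcases hez with hm | ⟨hexc, hevc⟩
    · unfold F; omega
    · have := II_noMixed hlam hCE hev hj1 hjo hexc hevc
      unfold F; omega
  · have he1 : eps 0 (up lam) j = 1 := by
      have := eps_le_one 0 (up lam) j; omega
    obtain ⟨hmis, -⟩ := (eps_eq_one_iff 0 (up lam) j).mp he1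
    rw [tau_ne_one (by omega)] at hmis
    have := eps_le_psum (show (0:ℕ) ≤ 1 by omega) (up lam) j
    unfold F; omega

lemma II_pairs (hlam : IsPartition lam) (hCE : CountEven 1 lam) (hev : lam.sum % 2 = 0) :
    ∀ a, 1 ≤ a → a % 2 = 0 →
      colD 0 (up lam) a % 2 = colD 0 (up lam) (a+1) % 2 := by
  have hmu : IsPartition (up lam) := up_isPartition hlam
  have hpar : (0:ℕ) = 1 → (up lam).sum % 2 = 0 := fun h => absurd h (by omega)
  intro a ha hae
  obtain ⟨k, rfl⟩ : ∃ k, a = k + 1 := ⟨a - 1, by omega⟩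
  have h1 := II_claimF hlam hCE hev k (by omega)
  have h2 := II_claimF hlam hCE hev (k+2) (by omega)
  have hm1 := F_mono_succ hmu (by omega) hpar k
  have hm2 := F_mono_succ hmu (by omega) hpar (k+1)
  unfold colD
  simp only [Nat.add_sub_cancel, show k+1+1 = k+2 from rfl, show k+2-1 = k+1 from rfl] at *
  omega

lemma II_eps_range (hlam : IsPartition lam)
    {j : ℕ} (hj : height lam 1 + 1 ≤ j) : eps 0 (up lam) j = 0 := by
  rcases Nat.lt_or_ge j 2 with hj2 | hj2
  · -- j ≤ 1; then height lam 1 = 0, so lam = 0 and j = 1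
    have hj1 : j = 1 := by omega
    have hL0 : height lam 1 = 0 := by omega
    have hs0 : lam.sum = 0 := by
      rcases Nat.eq_zero_or_pos lam.sum with h | h
      · exact h
      · exfalso
        obtain ⟨x, hx⟩ := Multiset.exists_mem_of_ne_zero
          (show lam ≠ 0 by intro hc; rw [hc] at h; simp at h)
        have h1 := hlam x hx
        have h2 : x ∈ Multiset.filter (fun p => 1 ≤ p) lam :=
          Multiset.mem_filter.mpr ⟨hx, h1⟩
        have : 0 < height lam 1 := by
          unfold height
          rw [Multiset.card_pos]
          intro hcc
          rw [hcc] at h2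
          exact Multiset.notMem_zero _ h2
        omega
    subst hj1
    rw [eps_eq_zero_iff]
    left
    have hpu := psum_up hlam 1
    rw [if_pos (le_refl 1)] at hpu
    have : psum lam 1 ≤ lam.sum := psum_le_sum lam 1
    rw [tau_ne_one (by omega)]
    omega
  · -- j ≥ 2 : parts vanish, exception with 0
    rw [eps_eq_zero_iff]
    right
    have h1 := pt_up hlam (show 1 ≤ j by omega)
    have h2 := pt_up hlam (show 1 ≤ j+1 by omega)
    rw [if_neg (by omega)] at h1
    rw [if_neg (by omega)] at h2
    have h3 : pt lam j = 0 := by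
      by_contra hc
      have hcp : 1 ≤ pt lam j := by omega
      have := (pt_pos_iff (l := lam) (show 1 ≤ j by omega)).mp hcp
      omega
    have h4 : pt lam (j+1) = 0 := by
      have := pt_mono lam (show j ≤ j+1 by omega)
      omega
    omega

lemma II_key3 (hlam : IsPartition lam) (j : ℕ) :
    psum lam j + (if height lam 1 + 1 ≤ j then 1 else 0) ≤ F 0 (up lam) j := by
  have hpu := psum_up hlam j
  rcases Nat.eq_zero_or_pos j with rfl | hj1
  · rw [F_zero]
    have := psum_zero lam
    simp only [if_neg (show ¬ (1:ℕ) ≤ 0 by omega), if_neg (show ¬ height lam 1 + 1 ≤ 0 by omega)] at *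
    omega
  · rw [if_pos (show 1 ≤ j by omega)] at hpu
    by_cases hL : height lam 1 + 1 ≤ j
    · have he := II_eps_range hlam hL
      rw [if_pos hL]
      unfold F
      omega
    · rw [if_neg hL]
      have := eps_le_one 0 (up lam) j
      unfold F
      omega

lemma II_key4 (hlam : IsPartition lam) (hCE : CountEven 1 lam) (hev : lam.sum % 2 = 0)
    {η : Ptn} (hη : IsPartition η)
    (hpair : ∀ a, 1 ≤ a → a % 2 = 0 → pt η a % 2 = pt η (a+1) % 2)
    (hη1 : pt η 1 % 2 = 1)
    (hdom : ∀ j, psum lam j + (if height lam 1 + 1 ≤ j then 1 else 0) ≤ psum η j) :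
    ∀ j, F 0 (up lam) j ≤ psum η j := by
  have hGodd : ∀ jj, jj % 2 = 1 → psum η jj % 2 = 1 := by
    intro jj hjj
    have := psum_odd_of_pairs0 hpair jj hjj
    omega
  intro j0
  by_contra hcon
  push_neg at hcon
  have hj01 : 1 ≤ j0 := by
    by_contra h0
    have : j0 = 0 := by omega
    rw [this, F_zero] at hcon
    omega
  have hpu := psum_up hlam j0
  rw [if_pos hj01] at hpu
  have hd0 := hdom j0
  have he0 : eps 0 (up lam) j0 = 0 := by
    rcases Nat.eq_zero_or_pos (eps 0 (up lam) j0) with he | he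
    · exact he
    · exfalso
      have he1 : eps 0 (up lam) j0 = 1 := by
        have := eps_le_one 0 (up lam) j0; omega
      unfold F at hcon
      split_ifs at hd0 <;> omega
  have hFj : F 0 (up lam) j0 = psum lam j0 + 1 := by
    unfold F; omega
  have hrange : j0 ≤ height lam 1 := by
    by_contra hcz
    rw [if_pos (by omega)] at hd0
    omega
  rw [if_neg (by omega)] at hd0
  have hGj0 : psum η j0 = psum lam j0 := by omega
  obtain ⟨k0, rfl⟩ : ∃ k, j0 = k + 1 := ⟨j0 - 1, by omega⟩
  have hse1 := psum_succ η k0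
  have hsl1 := psum_succ lam k0
  have hse2 := psum_succ η (k0+1)
  have hsl2 := psum_succ lam (k0+1)
  simp only [show k0+1+1 = k0+2 from rfl] at hse2 hsl2
  have hdk0 := hdom k0
  have hdk2 := hdom (k0+2)
  have hdk0' : psum lam k0 ≤ psum η k0 := by
    split_ifs at hdk0 <;> omega
  have hdk2' : psum lam (k0+2) ≤ psum η (k0+2) := by
    split_ifs at hdk2 <;> omega
  have hemono := pt_mono η (show k0+1 ≤ k0+2 by omega)
  -- pt of up lam at relevant spots
  have hj0ev : (k0+1) % 2 = 0 := by
    by_contra hcz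
    have hG := hGodd (k0+1) (by omega)
    have hez := (eps_eq_zero_iff 0 (up lam) (k0+1)).mp he0
    rw [tau_ne_one (by omega)] at hez
    rcases hez with hm | ⟨hexc1, hexc2⟩
    · omega
    · have := II_noMixed hlam hCE hev (show 1 ≤ k0+1 by omega) (by omega) hexc1 hexc2
      omega
  have hk02 : 2 ≤ k0 + 1 := by omega
  by_cases hA : (psum lam (k0+1) + 1) % 2 = (k0+1) % 2
  · -- case A : match, psum lam (k0+1) odd
    have hpsodd : psum lam (k0+1) % 2 = 1 := by omega
    have hnoc : pt lam (k0+2) = pt lam (k0+1) := by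
      have hmono := pt_mono lam (show k0+1 ≤ k0+2 by omega)
      rcases Nat.eq_or_lt_of_le hmono with h | h
      · omega
      · exfalso
        have hKP := KP hlam (le_refl 1) hCE (show 1 ≤ k0+1 by omega)
          (by simp only [show k0+1+1 = k0+2 from rfl]; omega)
        rw [tau_one_eq] at hKP
        omega
    have hηup : pt η (k0+1) ≤ pt lam (k0+1) := by omega
    have hηev : pt η (k0+1) % 2 = 0 := by
      have h1 := hGodd k0 (by omega)
      omega
    have hηlow : pt lam (k0+2) ≤ pt η (k0+2) := by omega
    have hηeq1 : pt η (k0+1) = pt lam (k0+1) := by omega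
    have hcev : pt lam (k0+1) % 2 = 0 := by omega
    have hc1 : 1 ≤ pt lam (k0+1) := by
      by_contra hcz
      have h0 : pt lam (k0+1) = 0 := by omega
      have := psum_stab lam (show 1 ≤ k0+1 by omega) h0
      omega
    have inv : ∀ i, k0+1 ≤ i → (pt lam i = pt lam (k0+1) ∧ pt η i = pt lam (k0+1) ∧
        psum η i = psum lam i ∧ psum lam i % 2 = 1) := by
      intro i hi
      induction i, hi using Nat.le_induction with
      | base => exact ⟨rfl, hηeq1, by omega, hpsodd⟩
      | succ i hi ih =>
        obtain ⟨ih1, ih2, ih3, ih4⟩ := ih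
        have hnoc' : pt lam (i+1) = pt lam (k0+1) := by
          have hmono := pt_mono lam (show i ≤ i+1 by omega)
          rcases Nat.eq_or_lt_of_le hmono with h | h
          · omega
          · exfalso
            have hKP := KP hlam (le_refl 1) hCE (show 1 ≤ i by omega) h
            rw [tau_one_eq] at hKP
            omega
        have hsei := psum_succ η i
        have hsli := psum_succ lam i
        have hdi := hdom (i+1)
        have hdi' : psum lam (i+1) ≤ psum η (i+1) := by
          split_ifs at hdi <;> omega
        have hηl : pt lam (k0+1) ≤ pt η (i+1) := by omega
        have hηm := pt_mono η (show i ≤ i+1 by omega)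
        have hmul := Nat.mul_mod 1 1 2
        refine ⟨hnoc', by omega, by omega, ?_⟩
        have : psum lam (i+1) = psum lam i + pt lam (k0+1) := by omega
        omega
    have hbig := inv (lam.sum + 1) (by
      have h1 := height_le_card lam 1
      have h2 := card_le_sum hlam
      omega)
    have := pt_zero_of_large hlam (show lam.sum + 1 ≤ lam.sum + 1 from le_refl _)
    omega
  · -- case B : exception with mismatch at even index
    have hexc : pt (up lam) (k0+1) = pt (up lam) (k0+2) ∧
        pt (up lam) (k0+1) % 2 = 0 := by
      have hez := (eps_eq_zero_iff 0 (up lam) (k0+1)).mp he0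
      rw [tau_ne_one (by omega)] at hez
      simp only [show k0+1+1 = k0+2 from rfl] at hez
      rcases hez with hm | h
      · exfalso; omega
      · exact h
    have hp1 := pt_up hlam (show 1 ≤ k0+1 by omega)
    have hp2 := pt_up hlam (show 1 ≤ k0+2 by omega)
    rw [if_neg (by omega)] at hp1
    rw [if_neg (by omega)] at hp2
    have hpl1 : pt lam (k0+1) = pt (up lam) (k0+1) := by omega
    have hpl2 : pt lam (k0+2) = pt (up lam) (k0+1) := by omega
    have hηup : pt η (k0+1) ≤ pt lam (k0+1) := by omega
    have hηodd : pt η (k0+1) % 2 = 1 := by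
      have h1 := hGodd k0 (by omega)
      have h2 : psum lam (k0+1) % 2 = 0 := by omega
      omega
    have hηlow : pt lam (k0+2) ≤ pt η (k0+2) := by omega
    omega

end IdII

lemma identity_II {lam : Ptn} (hlam : IsPartition lam) (hCE : CountEven 1 lam)
    (hev : lam.sum % 2 = 0) :
    transpose (col 0 (up lam)) = col 0 (up (transpose lam)) := by
  have hmu : IsPartition (up lam) := up_isPartition hlam
  have hTlam : IsPartition (transpose lam) := transpose_isPartition lam
  have hmu' : IsPartition (up (transpose lam)) := up_isPartition hTlam
  have hsu : (up lam).sum = lam.sum + 1 := sum_up lam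
  have hsu' : (up (transpose lam)).sum = (transpose lam).sum + 1 := sum_up (transpose lam)
  have hts : (transpose lam).sum = lam.sum := transpose_sum lam
  have hpar : (0:ℕ) = 1 → (up lam).sum % 2 = 0 := fun h => absurd h (by omega)
  have hpar' : (0:ℕ) = 1 → (up (transpose lam)).sum % 2 = 0 := fun h => absurd h (by omega)
  have hm : IsPartition (col 0 (up lam)) := col_isPartition _ _
  have hm' : IsPartition (col 0 (up (transpose lam))) := col_isPartition _ _
  have hsm : (col 0 (up lam)).sum = (up lam).sum := sum_col hmu (by omega) hpar
  have hsm' : (col 0 (up (transpose lam))).sum = (up (transpose lam)).sum :=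
    sum_col hmu' (by omega) hpar'
  -- transpose of lam CountEven glue not needed; use key lemmas
  have hTmCE : CountEven 0 (transpose (col 0 (up lam))) := by
    apply countEven_transpose_of_pairs ?_ (by omega)
    intro a ha hab
    rw [pt_col hmu (by omega) hpar ha, pt_col hmu (by omega) hpar (show 1 ≤ a+1 by omega)]
    exact II_pairs hlam hCE hev a ha hab
  have hdomTm : Dom (transpose (col 0 (up lam))) (up (transpose lam)) := by
    have h1 : Dom (transpose (up (transpose lam))) (col 0 (up lam)) := by
      intro j
      rw [psum_col hmu (by omega) hpar]
      have h2 := psum_upStar hlam j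
      have h3 := II_key3 hlam j
      split_ifs at h2 h3 <;> omega
    have hsums : (transpose (up (transpose lam))).sum = (col 0 (up lam)).sum := by
      rw [transpose_sum, hsm]
      omega
    have h4 := dom_transpose (transpose_isPartition _) hm hsums h1
    rw [transpose_transpose hmu'] at h4
    exact h4
  have hd1 : Dom (transpose (col 0 (up lam))) (col 0 (up (transpose lam))) :=
    col_max hmu' (by omega) hpar' (transpose_isPartition _) hTmCE hdomTm
  -- direction 2
  have hpair' : ∀ a, 1 ≤ a → a % 2 = 0 →
      pt (transpose (col 0 (up (transpose lam)))) a % 2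
        = pt (transpose (col 0 (up (transpose lam)))) (a+1) % 2 := by
    intro a ha hab
    exact pairs_of_countEven hm' (countEven_col hmu' (by omega) hpar') ha hab
  have hη1 : pt (transpose (col 0 (up (transpose lam)))) 1 % 2 = 1 := by
    have h1 : pt (transpose (col 0 (up (transpose lam)))) 1
        = height (col 0 (up (transpose lam))) 1 := by
      unfold pt
      rw [transpose_transpose hm']
    have h2 := card_parity0 hm' (countEven_col hmu' (by omega) hpar')
    rw [h1, h2, hsm', hsu', hts]
    omega
  have hdom' : ∀ j, psum lam j + (if height lam 1 + 1 ≤ j then 1 else 0)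
      ≤ psum (transpose (col 0 (up (transpose lam)))) j := by
    intro j
    have h1 : Dom (col 0 (up (transpose lam))) (up (transpose lam)) :=
      dom_col hmu' (by omega) hpar'
    have h2 := dom_transpose hm' hmu' hsm' h1
    have h3 := h2 j
    have h4 := psum_upStar hlam j
    split_ifs at h4 ⊢ <;> omega
  have hd2F : ∀ j, F 0 (up lam) j ≤ psum (transpose (col 0 (up (transpose lam)))) j :=
    II_key4 hlam hCE hev (transpose_isPartition _) hpair' hη1 hdom'
  have hd2 : Dom (col 0 (up (transpose lam))) (transpose (col 0 (up lam))) := by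
    have h1 : Dom (col 0 (up lam)) (transpose (col 0 (up (transpose lam)))) := by
      intro j
      rw [psum_col hmu (by omega) hpar]
      exact hd2F j
    have hsums : (col 0 (up lam)).sum = (transpose (col 0 (up (transpose lam)))).sum := by
      rw [transpose_sum, hsm, hsm']
      omega
    have h2 := dom_transpose hm (transpose_isPartition _) hsums h1
    rw [transpose_transpose hm'] at h2
    exact h2
  exact ext_of_psum (transpose_isPartition _) hm'
    (fun j => le_antisymm (hd1 j) (hd2 j))

-- ===== S15: Identity (iii) =====

section IdIII

variable {lam : Ptn}

lemma pt_transpose_eq {l : Ptn} {i : ℕ} (hi : 1 ≤ i) :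
    pt (transpose l) i = height l i := by
  unfold pt
  exact height_transpose_transpose i hi

/-- either hypothesis gives pair parity of κ = transpose lam in the D case -/
lemma III_pairsK (hlam : IsPartition lam) (hCE : CountEven 0 lam) :
    ∀ a, 1 ≤ a → a % 2 = 0 →
      pt (transpose lam) a % 2 = pt (transpose lam) (a+1) % 2 := by
  intro a ha hae
  have h1 := count_transpose (m := transpose lam) ha
  rw [transpose_transpose hlam] at h1
  have h2 := hCE a hae
  omega

lemma III_k1 (hlam : IsPartition lam) (hCE : CountEven 0 lam) (hev : lam.sum % 2 = 0) :
    pt (transpose lam) 1 % 2 = 0 := by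
  rw [pt_transpose_eq (le_refl 1)]
  have := card_parity0 hlam hCE
  omega

/-- FactB : corners of κ have even partial sums (in the needed circumstances) -/
lemma III_factB (hlam : IsPartition lam) (hev : lam.sum % 2 = 0)
    (hhyp : CountEven 0 lam ∨ CountEven 1 (transpose lam))
    {i : ℕ} (hi : 1 ≤ i) (hcor : pt (transpose lam) (i+1) < pt (transpose lam) i)
    (hpar : i % 2 = 0 → pt (transpose lam) i % 2 = 0) :
    psum (transpose lam) i % 2 = 0 := by
  rcases hhyp with hD | hC
  · by_cases hio : i % 2 = 1
    · have := psum_odd_of_pairs0 (III_pairsK hlam hD) i hio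
      have := III_k1 hlam hD hev
      omega
    · have h2 : 2 ≤ i := by omega
      have := psum_even_of_pairs0 (III_pairsK hlam hD) i h2 (by omega)
      have := III_k1 hlam hD hev
      have := hpar (by omega)
      omega
  · have hKP := KP (transpose_isPartition lam) (le_refl 1) hC hi hcor
    rw [tau_one_eq] at hKP
    exact hKP

/-- FactA : exceptional even positions have even partial sums -/
lemma III_factA (hlam : IsPartition lam) (hev : lam.sum % 2 = 0)
    (hhyp : CountEven 0 lam ∨ CountEven 1 (transpose lam))
    {j : ℕ} (hj : 1 ≤ j) (hje : j % 2 = 0)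
    (hexc : pt (transpose lam) j = pt (transpose lam) (j+1))
    (hevc : pt (transpose lam) j % 2 = 0) :
    psum (transpose lam) j % 2 = 0 := by
  rcases hhyp with hD | hC
  · have h2 : 2 ≤ j := by omega
    have := psum_even_of_pairs0 (III_pairsK hlam hD) j h2 hje
    have := III_k1 hlam hD hev
    omega
  · rcases Nat.eq_zero_or_pos (pt (transpose lam) j) with hc0 | hc1
    · have := psum_stab (transpose lam) hj hc0
      rw [transpose_sum] at this
      omega
    · have hκ := transpose_isPartition lam
      have hJj : height (transpose lam) (pt (transpose lam) j + 1) < j := by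
        by_contra hcon
        have : j ≤ height (transpose lam) (pt (transpose lam) j + 1) := by omega
        have := (pt_galois (transpose lam)
          (show 1 ≤ pt (transpose lam) j + 1 by omega) hj).mpr this
        omega
      have hjH : j ≤ height (transpose lam) (pt (transpose lam) j) :=
        (pt_galois (transpose lam) hc1 hj).mp (by omega)
      have hrun : psum (transpose lam) j
          = psum (transpose lam) (height (transpose lam) (pt (transpose lam) j + 1))
          + (j - height (transpose lam) (pt (transpose lam) j + 1)) * (pt (transpose lam) j) := by
        apply psum_run (by omega)
        intro i h1 h2
        exact pt_between hc1 h1 (by omega)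
      have hcorner : psum (transpose lam)
          (height (transpose lam) (pt (transpose lam) j + 1)) % 2 = 0 := by
        rcases Nat.eq_zero_or_pos (height (transpose lam) (pt (transpose lam) j + 1)) with h0 | hJp
        · rw [h0, psum_zero]
        · have hKP := KP hκ (le_refl 1) hC hJp ?_
          · rw [tau_one_eq] at hKP
            exact hKP
          · have ha : pt (transpose lam)
                (height (transpose lam) (pt (transpose lam) j + 1) + 1) = pt (transpose lam) j :=
              pt_between hc1 (by omega) (by omega)
            have hb2 : pt (transpose lam) j + 1
                ≤ pt (transpose lam) (height (transpose lam) (pt (transpose lam) j + 1)) :=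
              (pt_galois (transpose lam) (by omega) hJp).mpr (by omega)
            omega
      have hmul := Nat.mul_mod (j - height (transpose lam) (pt (transpose lam) j + 1))
        (pt (transpose lam) j) 2
      rw [hevc, Nat.mul_zero] at hmul
      omega

lemma III_claimF (hlam : IsPartition lam) (hev : lam.sum % 2 = 0)
    (hhyp : CountEven 0 lam ∨ CountEven 1 (transpose lam)) :
    ∀ j, j % 2 = 0 → F 0 (transpose lam) j % 2 = 0 := by
  intro j hje
  rcases Nat.eq_zero_or_pos j with rfl | hj1
  · rw [F_zero]
  · rcases Nat.eq_zero_or_pos (eps 0 (transpose lam) j) with he | he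
    · have hez := (eps_eq_zero_iff 0 (transpose lam) j).mp he
      rw [tau_ne_one (by omega)] at hez
      rcases hez with hm | ⟨hexc, hevc⟩
      · unfold F; omega
      · have := III_factA hlam hev hhyp hj1 hje hexc hevc
        unfold F; omega
    · have he1 : eps 0 (transpose lam) j = 1 := by
        have := eps_le_one 0 (transpose lam) j; omega
      obtain ⟨hmis, -⟩ := (eps_eq_one_iff 0 (transpose lam) j).mp he1
      rw [tau_ne_one (by omega)] at hmis
      have := eps_le_psum (show (0:ℕ) ≤ 1 by omega) (transpose lam) j
      unfold F; omega

lemma III_pairs (hlam : IsPartition lam) (hev : lam.sum % 2 = 0)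
    (hhyp : CountEven 0 lam ∨ CountEven 1 (transpose lam)) :
    ∀ a, 1 ≤ a → a % 2 = 1 →
      colD 0 (transpose lam) a % 2 = colD 0 (transpose lam) (a+1) % 2 := by
  have hκ : IsPartition (transpose lam) := transpose_isPartition lam
  have hpar : (0:ℕ) = 1 → (transpose lam).sum % 2 = 0 := fun h => absurd h (by omega)
  intro a ha hao
  obtain ⟨k, rfl⟩ : ∃ k, a = k + 1 := ⟨a - 1, by omega⟩
  have h1 := III_claimF hlam hev hhyp k (by omega)
  have h2 := III_claimF hlam hev hhyp (k+2) (by omega)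
  have hm1 := F_mono_succ hκ (by omega) hpar k
  have hm2 := F_mono_succ hκ (by omega) hpar (k+1)
  unfold colD
  simp only [Nat.add_sub_cancel, show k+1+1 = k+2 from rfl, show k+2-1 = k+1 from rfl] at *
  omega

lemma minPart_up_of_two (hlam : IsPartition lam) (h2 : 2 ≤ Multiset.card lam) :
    minPart (up lam) = minPart lam := by
  have hne : lam ≠ 0 := by
    intro hc; rw [hc] at h2; simp at h2
  have hMmem := maxPart_mem hne
  have hupne : up lam ≠ 0 := Multiset.cons_ne_zero
  -- the erase still contains some element
  have herase_ne : lam.erase (maxPart lam) ≠ 0 := by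
    intro hc
    have := Multiset.card_erase_of_mem hMmem
    rw [hc] at this
    simp at this
    omega
  apply le_antisymm
  · -- minPart (up lam) ≤ minPart lam : find a member of up lam that is ≤ ... 
    obtain ⟨x, hx⟩ := Multiset.exists_mem_of_ne_zero herase_ne
    have hx2 : x ∈ lam := Multiset.mem_of_mem_erase hx
    -- minPart lam ∈ lam; if minPart lam ∈ erase, done; else minPart lam = maxPart with mult 1??
    by_cases hmm : minPart lam ∈ lam.erase (maxPart lam)
    · exact minPart_le (Multiset.mem_cons_of_mem hmm)
    ·
      -- minPart lam ∉ erase means count (minPart lam) lam = 1 and minPart lam = maxPart lam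
      have h3 : minPart lam = maxPart lam := by
        by_contra hcc
        have : minPart lam ∈ lam.erase (maxPart lam) :=
          (Multiset.mem_erase_of_ne hcc).mpr (minPart_mem hne)
        exact hmm this
      -- all parts equal; x ∈ erase with minPart ≤ x ≤ maxPart = minPart
      have hxle := le_maxPart hx2
      have hxge := minPart_le hx2
      have : x = minPart lam := by omega
      exact this ▸ minPart_le (Multiset.mem_cons_of_mem hx)
  · -- minPart lam ≤ minPart (up lam)
    have hm := minPart_mem hupne
    rcases Multiset.mem_cons.mp hm with h | h
    · -- minPart (up lam) = maxPart lam + 1 : but erase nonempty gives smaller member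
      obtain ⟨x, hx⟩ := Multiset.exists_mem_of_ne_zero herase_ne
      have h1 := minPart_le (l := up lam) (Multiset.mem_cons_of_mem hx)
      have h2 := le_maxPart (Multiset.mem_of_mem_erase hx)
      have h3 := minPart_le (Multiset.mem_of_mem_erase hx)
      omega
    · exact minPart_le (Multiset.mem_of_mem_erase h)

lemma III_C1 (hlam : IsPartition lam) {i : ℕ} (hi : 1 ≤ i)
    (hiv : i < minPart (up lam)) : height lam i = height lam 1 := by
  unfold height
  congr 1
  rw [Multiset.filter_eq_self.mpr, Multiset.filter_eq_self.mpr]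
  · intro p hp; exact hlam p hp
  · intro p hp
    -- p ≥ minPart (up lam) - 1 ≥ i
    by_cases hpm : p = maxPart lam
    · have : maxPart lam + 1 ∈ up lam := Multiset.mem_cons_self _ _
      have := minPart_le this
      omega
    · have hpe : p ∈ lam.erase (maxPart lam) := (Multiset.mem_erase_of_ne hpm).mpr hp
      have : p ∈ up lam := Multiset.mem_cons_of_mem hpe
      have := minPart_le this
      omega

lemma III_eps_v (hlam : IsPartition lam) {j : ℕ}
    (hjv : j < minPart (up lam)) : eps 0 (transpose lam) j = 0 := by
  rcases Nat.eq_zero_or_pos j with rfl | hj1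
  · exact eps_zero 0 (transpose lam)
  -- parts up to j are all equal to height lam 1
  have hC1 : ∀ i, 1 ≤ i → i ≤ j → pt (transpose lam) i = height lam 1 := by
    intro i h1 h2
    rw [pt_transpose_eq h1]
    exact III_C1 hlam h1 (by omega)
  have hrun : psum (transpose lam) j = j * height lam 1 := by
    have := psum_run (ν := transpose lam) (j1 := 0) (j2 := j) (c := height lam 1)
      (by omega) (fun i h1 h2 => hC1 i (by omega) h2)
    rw [psum_zero] at this
    simp only [Nat.sub_zero] at this
    omega
  have hptj : pt (transpose lam) j = height lam 1 := hC1 j hj1 (le_refl j)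
  by_cases hLe : height lam 1 % 2 = 0
  · -- exception or if pt (j+1) differs... check pt (j+1)
    by_cases hj1v : pt (transpose lam) (j+1) = height lam 1
    · rw [eps_eq_zero_iff]
      right
      omega
    · -- height lam (j+1) ≠ height lam 1 : j+1 ≥ v forced, and card lam ≤ 1
      -- show match instead
      rw [eps_eq_zero_iff]
      left
      rw [tau_ne_one (by omega)]
      have hcard : Multiset.card lam ≤ 1 := by
        by_contra hcc
        have h2 : 2 ≤ Multiset.card lam := by omega
        have hv := minPart_up_of_two hlam h2
        have hne : lam ≠ 0 := by
          intro hc; rw [hc] at h2; simp at h2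
        have hj1lt : j + 1 ≤ minPart lam := by omega
        rcases Nat.lt_or_ge (j+1) (minPart lam) with hlt | hge
        · have hcc1 := III_C1 hlam (show 1 ≤ j+1 by omega) (by omega)
          rw [pt_transpose_eq (show 1 ≤ j+1 by omega)] at hj1v
          exact hj1v hcc1
        · have hmi : height lam (minPart lam) = height lam 1 := height_one_minPart hlam hne
          have hje : j + 1 = minPart lam := by omega
          rw [pt_transpose_eq (show 1 ≤ j+1 by omega), hje, hmi] at hj1v
          exact hj1v rfl
      -- card ≤ 1 and height lam 1 even forces lam = 0, contradicting 1 ≤ j < v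
      exfalso
      have hh1 : height lam 1 ≤ 1 := by
        have h1 := height_le_card lam 1
        have h2 := height_one_eq_card hlam
        omega
      have hh0 : height lam 1 = 0 := by omega
      have hcard0 : Multiset.card lam = 0 := by
        have := height_one_eq_card hlam; omega
      have hlam0 : lam = 0 := Multiset.card_eq_zero.mp hcard0
      subst hlam0
      have hmem : maxPart (0:Ptn) + 1 ∈ up (0:Ptn) := Multiset.mem_cons_self _ _
      have hle := minPart_le hmem
      have hmax0 : maxPart (0:Ptn) = 0 := by simp [maxPart]
      rw [hmax0] at hle
      omega
  · -- height lam 1 odd : match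
    rw [eps_eq_zero_iff]
    left
    rw [tau_ne_one (by omega)]
    have hmul := Nat.mul_mod j (height lam 1) 2
    rw [show height lam 1 % 2 = 1 by omega, Nat.mul_one] at hmul
    omega

end IdIII

section IdIII2

variable {lam : Ptn}

lemma III_key3 (hlam : IsPartition lam) (hev : lam.sum % 2 = 0) (j : ℕ) :
    psum (transpose (down (up lam))) j ≤ F 0 (transpose lam) j := by
  have hdu := psum_downUp hlam j
  have hvM : minPart (up lam) ≤ maxPart lam + 1 :=
    minPart_le (Multiset.mem_cons_self _ _)
  by_cases hv : minPart (up lam) ≤ j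
  · rw [if_pos hv] at hdu
    by_cases hM : maxPart lam + 1 ≤ j
    · rw [if_pos hM] at hdu
      have hpt0 : pt (transpose lam) j = 0 := by
        rw [pt_transpose_eq (show 1 ≤ j by omega)]
        by_contra hc
        have := height_pos_le_max (l := lam) (a := j) (by omega)
        omega
      have he := eps_eq_zero_of_pt_zero (transpose_isPartition lam)
        (show (0:ℕ) ≤ 1 by omega) (fun h => absurd h (by omega)) (show 1 ≤ j by omega) hpt0
      unfold F
      omega
    · rw [if_neg hM] at hdu
      have := eps_le_one 0 (transpose lam) j
      have := eps_le_psum (show (0:ℕ) ≤ 1 by omega) (transpose lam) j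
      unfold F
      omega
  · rw [if_neg hv] at hdu
    rw [if_neg (by omega)] at hdu
    have he := III_eps_v hlam (show j < minPart (up lam) by omega)
    unfold F
    omega

lemma III_key4 (hlam : IsPartition lam) (hev : lam.sum % 2 = 0)
    (hhyp : CountEven 0 lam ∨ CountEven 1 (transpose lam))
    {η : Ptn} (hη : IsPartition η)
    (hpair : ∀ a, 1 ≤ a → a % 2 = 1 → pt η a % 2 = pt η (a+1) % 2)
    (hdom : ∀ j, psum (transpose lam) j + (if maxPart lam + 1 ≤ j then 1 else 0)
      ≤ psum η j + (if minPart (up lam) ≤ j then 1 else 0)) :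
    ∀ j, F 0 (transpose lam) j ≤ psum η j := by
  have hGev : ∀ jj, jj % 2 = 0 → psum η jj % 2 = 0 := psum_even_of_pairs1 hpair
  have hvM : minPart (up lam) ≤ maxPart lam + 1 :=
    minPart_le (Multiset.mem_cons_self _ _)
  have hκ : IsPartition (transpose lam) := transpose_isPartition lam
  intro j0
  by_contra hcon
  push_neg at hcon
  have hj01 : 1 ≤ j0 := by
    by_contra h0
    have : j0 = 0 := by omega
    rw [this, F_zero] at hcon
    omega
  have hd0 := hdom j0
  have hno_eps : eps 0 (transpose lam) j0 ≤ 1 := eps_le_one _ _ _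
  have hMj : ¬ (maxPart lam + 1 ≤ j0) := by
    intro hM
    have hpt0 : pt (transpose lam) j0 = 0 := by
      rw [pt_transpose_eq (show 1 ≤ j0 by omega)]
      by_contra hc
      have := height_pos_le_max (l := lam) (a := j0) (by omega)
      omega
    have he := eps_eq_zero_of_pt_zero hκ (show (0:ℕ) ≤ 1 by omega)
      (fun h => absurd h (by omega)) (show 1 ≤ j0 by omega) hpt0
    rw [if_pos hM] at hd0
    unfold F at hcon
    split_ifs at hd0 <;> omega
  rw [if_neg hMj] at hd0
  have hvj : minPart (up lam) ≤ j0 := by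
    by_contra hc
    have he := III_eps_v hlam (show j0 < minPart (up lam) by omega)
    rw [if_neg hc] at hd0
    unfold F at hcon
    omega
  rw [if_pos hvj] at hd0
  have he0 : eps 0 (transpose lam) j0 = 0 := by
    unfold F at hcon
    omega
  have hGj0 : psum η j0 + 1 = psum (transpose lam) j0 := by
    unfold F at hcon
    omega
  obtain ⟨k0, rfl⟩ : ∃ k, j0 = k + 1 := ⟨j0 - 1, by omega⟩
  have hse1 := psum_succ η k0
  have hsk1 := psum_succ (transpose lam) k0
  have hse2 := psum_succ η (k0+1)
  have hsk2 := psum_succ (transpose lam) (k0+1)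
  simp only [show k0+1+1 = k0+2 from rfl] at hse2 hsk2
  have hdk0 := hdom k0
  have hdk2 := hdom (k0+2)
  have hdk0' : psum (transpose lam) k0 ≤ psum η k0 + 1 := by
    split_ifs at hdk0 <;> omega
  have hdk2' : psum (transpose lam) (k0+2) ≤ psum η (k0+2) + 1 := by
    split_ifs at hdk2 <;> omega
  have hemono := pt_mono η (show k0+1 ≤ k0+2 by omega)
  have hkmono := pt_mono (transpose lam) (show k0+1 ≤ k0+2 by omega)
  by_cases hA : psum (transpose lam) (k0+1) % 2 = (k0+1) % 2
  · -- case A : match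
    have hj0odd : (k0+1) % 2 = 1 := by
      by_contra hcz
      have := hGev (k0+1) (by omega)
      omega
    have hpsodd : psum (transpose lam) (k0+1) % 2 = 1 := by omega
    have hc1 : 1 ≤ pt (transpose lam) (k0+1) := by
      by_contra hcz
      have h0 : pt (transpose lam) (k0+1) = 0 := by omega
      have := psum_stab (transpose lam) (show 1 ≤ k0+1 by omega) h0
      rw [transpose_sum] at this
      omega
    have hnoc : pt (transpose lam) (k0+2) = pt (transpose lam) (k0+1) := by
      rcases Nat.eq_or_lt_of_le hkmono with h | h
      · omega
      · exfalso
        have := III_factB hlam hev hhyp (show 1 ≤ k0+1 by omega)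
          (by simp only [show k0+1+1 = k0+2 from rfl]; omega) (by omega)
        omega
    have hηup : pt η (k0+1) ≤ pt (transpose lam) (k0+1) := by omega
    have hηev : pt η (k0+1) % 2 = 0 := by
      have h1 := hGev k0 (by omega)
      omega
    have hηlow : pt (transpose lam) (k0+2) ≤ pt η (k0+2) := by omega
    have hηeq1 : pt η (k0+1) = pt (transpose lam) (k0+1) := by omega
    have hcev : pt (transpose lam) (k0+1) % 2 = 0 := by omega
    have inv : ∀ i, k0+1 ≤ i → (pt (transpose lam) i = pt (transpose lam) (k0+1) ∧
        pt η i = pt (transpose lam) (k0+1) ∧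
        psum η i + 1 = psum (transpose lam) i ∧ psum (transpose lam) i % 2 = 1) := by
      intro i hi
      induction i, hi using Nat.le_induction with
      | base => exact ⟨rfl, hηeq1, by omega, hpsodd⟩
      | succ i hi ih =>
        obtain ⟨ih1, ih2, ih3, ih4⟩ := ih
        have hnoc' : pt (transpose lam) (i+1) = pt (transpose lam) (k0+1) := by
          have hmono := pt_mono (transpose lam) (show i ≤ i+1 by omega)
          rcases Nat.eq_or_lt_of_le hmono with h | h
          · omega
          · exfalso
            have := III_factB hlam hev hhyp (show 1 ≤ i by omega) h (by omega)
            omega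
        have hsei := psum_succ η i
        have hski := psum_succ (transpose lam) i
        have hdi := hdom (i+1)
        have hdi' : psum (transpose lam) (i+1) ≤ psum η (i+1) + 1 := by
          split_ifs at hdi <;> omega
        have hηl : pt (transpose lam) (k0+1) ≤ pt η (i+1) := by omega
        have hηm := pt_mono η (show i ≤ i+1 by omega)
        refine ⟨hnoc', by omega, by omega, ?_⟩
        have : psum (transpose lam) (i+1) = psum (transpose lam) i
            + pt (transpose lam) (k0+1) := by omega
        omega
    have hbig := inv ((transpose lam).sum + 1) (by
      have h1 := height_le_card (transpose lam) 1
      have h2 := card_le_sum hκ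
      have h3 : k0 + 1 ≤ height (transpose lam) 1 := by
        have := (pt_pos_iff (l := transpose lam) (show 1 ≤ k0+1 by omega)).mp hc1
        omega
      omega)
    have := pt_zero_of_large hκ (show (transpose lam).sum + 1 ≤ (transpose lam).sum + 1 from le_refl _)
    omega
  · -- case B : mismatch, so exception
    have hexc : pt (transpose lam) (k0+1) = pt (transpose lam) (k0+2) ∧
        pt (transpose lam) (k0+1) % 2 = 0 := by
      have hez := (eps_eq_zero_iff 0 (transpose lam) (k0+1)).mp he0
      rw [tau_ne_one (by omega)] at hez
      simp only [show k0+1+1 = k0+2 from rfl] at hez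
      rcases hez with hm | h
      · exact absurd hm hA
      · exact h
    have hj0odd : (k0+1) % 2 = 1 := by
      by_contra hcz
      have := III_factA hlam hev hhyp (show 1 ≤ k0+1 by omega) (by omega)
        (by simp only [show k0+1+1 = k0+2 from rfl]; exact hexc.1) hexc.2
      omega
    have hηup : pt η (k0+1) ≤ pt (transpose lam) (k0+1) := by omega
    have hηodd : pt η (k0+1) % 2 = 1 := by
      have h1 := hGev k0 (by omega)
      have h2 : psum (transpose lam) (k0+1) % 2 = 0 := by omega
      omega
    have hηlow : pt (transpose lam) (k0+2) ≤ pt η (k0+2) := by omega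
    omega

end IdIII2

lemma identity_III (hlam : IsPartition lam) (hev : lam.sum % 2 = 0)
    (hhyp : CountEven 0 lam ∨ CountEven 1 (transpose lam)) :
    transpose (col 0 (transpose lam)) = col 1 (down (up lam)) := by
  have hκ : IsPartition (transpose lam) := transpose_isPartition lam
  have hup : IsPartition (up lam) := up_isPartition hlam
  have hupne : up lam ≠ 0 := Multiset.cons_ne_zero
  have hw : IsPartition (down (up lam)) := down_isPartition hup
  have hts : (transpose lam).sum = lam.sum := transpose_sum lam
  have hsu : (up lam).sum = lam.sum + 1 := sum_up lam
  have hsw : (down (up lam)).sum + 1 = (up lam).sum := sum_down hup hupne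
  have hpar : (0:ℕ) = 1 → (transpose lam).sum % 2 = 0 := fun h => absurd h (by omega)
  have hpar' : (1:ℕ) = 1 → (down (up lam)).sum % 2 = 0 := fun _ => by omega
  have hm : IsPartition (col 0 (transpose lam)) := col_isPartition _ _
  have hm' : IsPartition (col 1 (down (up lam))) := col_isPartition _ _
  have hsm : (col 0 (transpose lam)).sum = (transpose lam).sum := sum_col hκ (by omega) hpar
  have hsm' : (col 1 (down (up lam))).sum = (down (up lam)).sum :=
    sum_col hw (le_refl 1) hpar'
  -- direction 1
  have hTmCE : CountEven 1 (transpose (col 0 (transpose lam))) := by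
    apply countEven_transpose_of_pairs ?_ (le_refl 1)
    intro a ha hab
    rw [pt_col hκ (by omega) hpar ha, pt_col hκ (by omega) hpar (show 1 ≤ a+1 by omega)]
    exact III_pairs hlam hev hhyp a ha hab
  have hdomTm : Dom (transpose (col 0 (transpose lam))) (down (up lam)) := by
    have h1 : Dom (transpose (down (up lam))) (col 0 (transpose lam)) := by
      intro j
      rw [psum_col hκ (by omega) hpar]
      exact III_key3 hlam hev j
    have hsums : (transpose (down (up lam))).sum = (col 0 (transpose lam)).sum := by
      rw [transpose_sum, hsm]
      omega
    have h4 := dom_transpose (transpose_isPartition _) hm hsums h1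
    rw [transpose_transpose hw] at h4
    exact h4
  have hd1 : Dom (transpose (col 0 (transpose lam))) (col 1 (down (up lam))) :=
    col_max hw (le_refl 1) hpar' (transpose_isPartition _) hTmCE hdomTm
  -- direction 2
  have hpair' : ∀ a, 1 ≤ a → a % 2 = 1 →
      pt (transpose (col 1 (down (up lam)))) a % 2
        = pt (transpose (col 1 (down (up lam)))) (a+1) % 2 := by
    intro a ha hab
    exact pairs_of_countEven hm' (countEven_col hw (le_refl 1) hpar') ha hab
  have hdom' : ∀ j, psum (transpose lam) j + (if maxPart lam + 1 ≤ j then 1 else 0)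
      ≤ psum (transpose (col 1 (down (up lam)))) j
        + (if minPart (up lam) ≤ j then 1 else 0) := by
    intro j
    have h1 : Dom (col 1 (down (up lam))) (down (up lam)) :=
      dom_col hw (le_refl 1) hpar'
    have h2 := dom_transpose hm' hw hsm' h1
    have h3 := h2 j
    have h4 := psum_downUp hlam j
    split_ifs at h4 ⊢ <;> omega
  have hd2F : ∀ j, F 0 (transpose lam) j ≤ psum (transpose (col 1 (down (up lam)))) j :=
    III_key4 hlam hev hhyp (transpose_isPartition _) hpair' hdom'
  have hd2 : Dom (col 1 (down (up lam))) (transpose (col 0 (transpose lam))) := by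
    have h1 : Dom (col 0 (transpose lam)) (transpose (col 1 (down (up lam)))) := by
      intro j
      rw [psum_col hκ (by omega) hpar]
      exact hd2F j
    have hsums : (col 0 (transpose lam)).sum = (transpose (col 1 (down (up lam)))).sum := by
      rw [transpose_sum, hsm, hsm']
      omega
    have h2 := dom_transpose hm (transpose_isPartition _) hsums h1
    rw [transpose_transpose hm'] at h2
    exact h2
  exact ext_of_psum (transpose_isPartition _) hm'
    (fun j => le_antisymm (hd1 j) (hd2 j))


/-- Lemma 3.8 of the paper: `((λ⁻)_C)* = ((λ*)⁻)_C` for `λ ∈ 𝒫_B(n)`;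
`((λ⁺)_B)* = ((λ*)⁺)_B` for `λ ∈ 𝒫_C(n)`; and `((λ*)_D)* = ((λ⁺)⁻)_C` when
`λ ∈ 𝒫_D(n)` or `λ* ∈ 𝒫_C(n)`. -/
theorem special_partition_identities :
    (∀ n : ℕ, Odd n → ∀ lam : Ptn, InP PType.B lam → lam.sum = n →
      transpose (collapse PType.C (down lam)) = collapse PType.C (down (transpose lam))) ∧
    (∀ n : ℕ, Even n → ∀ lam : Ptn, InP PType.C lam → lam.sum = n →
      transpose (collapse PType.B (up lam)) = collapse PType.B (up (transpose lam))) ∧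
    (∀ n : ℕ, Even n → ∀ lam : Ptn, IsPartition lam → lam.sum = n →
      (InP PType.D lam ∨ InP PType.C (transpose lam)) →
      transpose (collapse PType.D (transpose lam)) = collapse PType.C (down (up lam))) := by
  refine ⟨?_, ?_, ?_⟩
  · intro n hn lam hInP hsum
    obtain ⟨hlam, hCE⟩ := (InP_iff PType.B lam).mp hInP
    have hodd : lam.sum % 2 = 1 := by
      rw [hsum]; exact Nat.odd_iff.mp hn
    have hne : lam ≠ 0 := by
      intro h; rw [h] at hodd; simp at hodd
    have hTne : transpose lam ≠ 0 := transpose_ne_zero hlam hne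
    have hsd := sum_down hlam hne
    have hsd' := sum_down (transpose_isPartition lam) hTne
    have hts := transpose_sum lam
    have h1 : collapse PType.C (down lam) = col 1 (down lam) :=
      collapse_col_eq (down_isPartition hlam) (fun _ => by omega)
    have h2 : collapse PType.C (down (transpose lam)) = col 1 (down (transpose lam)) :=
      collapse_col_eq (down_isPartition (transpose_isPartition lam)) (fun _ => by omega)
    rw [h1, h2]
    exact identity_I hlam hCE hodd
  · intro n hn lam hInP hsum
    obtain ⟨hlam, hCE⟩ := (InP_iff PType.C lam).mp hInP
    have hev : lam.sum % 2 = 0 := by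
      rw [hsum]; exact Nat.even_iff.mp hn
    have h1 : collapse PType.B (up lam) = col 0 (up lam) :=
      collapse_col_eq (up_isPartition hlam) (fun h => absurd h (by decide))
    have h2 : collapse PType.B (up (transpose lam)) = col 0 (up (transpose lam)) :=
      collapse_col_eq (up_isPartition (transpose_isPartition lam))
        (fun h => absurd h (by decide))
    rw [h1, h2]
    exact identity_II hlam hCE hev
  · intro n hn lam hlam hsum hhyp
    have hev : lam.sum % 2 = 0 := by
      rw [hsum]; exact Nat.even_iff.mp hn
    have hhyp' : CountEven 0 lam ∨ CountEven 1 (transpose lam) := by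
      rcases hhyp with h | h
      · exact Or.inl ((InP_iff PType.D lam).mp h).2
      · exact Or.inr ((InP_iff PType.C (transpose lam)).mp h).2
    have hup : IsPartition (up lam) := up_isPartition hlam
    have hupne : up lam ≠ 0 := Multiset.cons_ne_zero
    have hsw := sum_down hup hupne
    have hsu := sum_up lam
    have h1 : collapse PType.D (transpose lam) = col 0 (transpose lam) :=
      collapse_col_eq (transpose_isPartition lam) (fun h => absurd h (by decide))
    have h2 : collapse PType.C (down (up lam)) = col 1 (down (up lam)) :=
      collapse_col_eq (down_isPartition hup) (fun _ => by omega)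
    rw [h1, h2]
    exact identity_III hlam hev hhyp'


end NilDual
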